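/- arXiv:1012.5931 — 4 statements merged into one kernel-verified Lean document; each statement's English description precedes it below -/
import Mathlib

section
/- Let R₀ < R* be real numbers, 0 < a₀ ≤ a₁, and let a : [R₀,R*] × ℝ → ℝ be smooth with a₀ ≤ a(R,θ) ≤ a₁ for all (R,θ). Let w₊, w₋, h₊, h₋ : [R₀,R*] × ℝ → ℝ be smooth with w₊ ≥ 0, w₋ ≥ 0, h₊ ≥ 0, h₋ ≥ 0, satisfying ∂_R w₊ + ∂_θ(a w₊) ≤ h₊ and ∂_R w₋ − ∂_θ(a w₋) ≤ h₋ everywhere. Fix L > a₁ R*. Define N^I(R) := ∬_{−L+a₁R ≤ θ₊ ≤ θ₋ ≤ L−a₁R} w₊(R,θ₊) w₋(R,θ₋) dθ₊ dθ₋, N^II(R) := ∫_{−L+a₁R}^{L−a₁R} w₊(R,θ) w₋(R,θ) dθ, and N^III(R) := (∫_{−L+a₁R}^{L−a₁R} h₊(R,θ) dθ)(∫_{−L+a₁R}^{L−a₁R} w₋(R,θ) dθ) + (∫_{−L+a₁R}^{L−a₁R} h₋(R,θ) dθ)(∫_{−L+a₁R}^{L−a₁R} w₊(R,θ) dθ).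 Then for every R ∈ (R₀,R*), (d/dR) N^I(R) + 2 a₀ N^II(R) ≤ N^III(R). -/
set_option maxHeartbeats 1600000
open Real MeasureTheory Function Set intervalIntegral

/-- Partial derivative in the first variable. -/
noncomputable def pd1 (f : ℝ → ℝ → ℝ) (x y : ℝ) : ℝ := deriv (fun s => f s y) x

/-- Partial derivative in the second variable. -/
noncomputable def pd2 (f : ℝ → ℝ → ℝ) (x y : ℝ) : ℝ := deriv (fun s => f x s) y

lemma one_le_top' : ((⊤ : ℕ∞) : WithTop ℕ∞) ≠ 0 := by
  exact ENat.one_le_iff_ne_zero_withTop.mp (by exact_mod_cast (le_top : (1:ℕ∞) ≤ ⊤))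

section hlp
variable {w : ℝ → ℝ → ℝ}

lemma pd1_hasDerivAt (hw : ContDiff ℝ (⊤:ℕ∞) (uncurry w)) (r θ : ℝ) :
    HasDerivAt (fun x => w x θ) (pd1 w r θ) r := by
  have h : DifferentiableAt ℝ (fun x => w x θ) r := by
    have h1 : DifferentiableAt ℝ (uncurry w) (r, θ) := (hw.differentiable one_le_top').differentiableAt
    exact h1.comp (f := fun x : ℝ => (x, θ)) r ((differentiable_id.prodMk (differentiable_const θ)).differentiableAt)
  exact h.hasDerivAt

lemma pd2_hasDerivAt (hw : ContDiff ℝ (⊤:ℕ∞) (uncurry w)) (r θ : ℝ) :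
    HasDerivAt (fun y => w r y) (pd2 w r θ) θ := by
  have h : DifferentiableAt ℝ (fun y => w r y) θ := by
    have h1 : DifferentiableAt ℝ (uncurry w) (r, θ) := (hw.differentiable one_le_top').differentiableAt
    exact h1.comp (f := fun y : ℝ => (r, y)) θ ((differentiable_const r).prodMk differentiable_id).differentiableAt
  exact h.hasDerivAt

lemma pd1_eq (hw : ContDiff ℝ (⊤:ℕ∞) (uncurry w)) (r θ : ℝ) :
    pd1 w r θ = fderiv ℝ (uncurry w) (r, θ) (1, 0) := by
  have h1 : HasFDerivAt (uncurry w) (fderiv ℝ (uncurry w) (r, θ)) (r, θ) :=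
    ((hw.differentiable one_le_top') (r, θ)).hasFDerivAt
  have h2 : HasDerivAt (fun x : ℝ => (x, θ)) ((1:ℝ), (0:ℝ)) r :=
    (hasDerivAt_id r).prodMk (hasDerivAt_const r θ)
  exact ((pd1_hasDerivAt hw r θ).unique (h1.comp_hasDerivAt (f := fun x : ℝ => (x, θ)) r h2))

lemma pd2_eq (hw : ContDiff ℝ (⊤:ℕ∞) (uncurry w)) (r θ : ℝ) :
    pd2 w r θ = fderiv ℝ (uncurry w) (r, θ) (0, 1) := by
  have h1 : HasFDerivAt (uncurry w) (fderiv ℝ (uncurry w) (r, θ)) (r, θ) :=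
    ((hw.differentiable one_le_top') (r, θ)).hasFDerivAt
  have h2 : HasDerivAt (fun y : ℝ => (r, y)) ((0:ℝ), (1:ℝ)) θ :=
    (hasDerivAt_const θ r).prodMk (hasDerivAt_id θ)
  exact ((pd2_hasDerivAt hw r θ).unique (h1.comp_hasDerivAt (f := fun y : ℝ => (r, y)) θ h2))

lemma cont_pd1 (hw : ContDiff ℝ (⊤:ℕ∞) (uncurry w)) :
    Continuous fun p : ℝ × ℝ => pd1 w p.1 p.2 := by
  have e : (fun p : ℝ × ℝ => pd1 w p.1 p.2)
      = fun p => fderiv ℝ (uncurry w) p ((1:ℝ), (0:ℝ)) :=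
    funext fun p => pd1_eq hw p.1 p.2
  rw [e]
  exact (hw.continuous_fderiv one_le_top').clm_apply continuous_const

lemma cont_pd2 (hw : ContDiff ℝ (⊤:ℕ∞) (uncurry w)) :
    Continuous fun p : ℝ × ℝ => pd2 w p.1 p.2 := by
  have e : (fun p : ℝ × ℝ => pd2 w p.1 p.2)
      = fun p => fderiv ℝ (uncurry w) p ((0:ℝ), (1:ℝ)) :=
    funext fun p => pd2_eq hw p.1 p.2
  rw [e]
  exact (hw.continuous_fderiv one_le_top').clm_apply continuous_const

lemma hasDerivAt_slice (hw : ContDiff ℝ (⊤:ℕ∞) (uncurry w)) {γ : ℝ → ℝ} {γ' r : ℝ}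
    (hγ : HasDerivAt γ γ' r) :
    HasDerivAt (fun x => w x (γ x)) (pd1 w r (γ r) + γ' * pd2 w r (γ r)) r := by
  have h1 : HasFDerivAt (uncurry w) (fderiv ℝ (uncurry w) (r, γ r)) (r, γ r) :=
    ((hw.differentiable one_le_top') _).hasFDerivAt
  have h2 : HasDerivAt (fun x : ℝ => (x, γ x)) ((1:ℝ), γ') r := (hasDerivAt_id r).prodMk hγ
  have h3 := h1.comp_hasDerivAt r h2
  refine HasDerivAt.congr_deriv h3 ?_
  have e : ((1:ℝ), γ') = ((1:ℝ), (0:ℝ)) + γ' • ((0:ℝ), (1:ℝ)) := by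
    simp [Prod.ext_iff]
  rw [e, map_add, (fderiv ℝ (uncurry w) (r, γ r)).map_smul, pd1_eq hw, pd2_eq hw]
  simp [smul_eq_mul]

lemma hasDerivAt_sect (hw : ContDiff ℝ (⊤:ℕ∞) (uncurry w)) (r c x : ℝ) :
    HasDerivAt (fun y => w r (c * y)) (c * pd2 w r (c * x)) x := by
  have h1 := pd2_hasDerivAt hw r (c * x)
  have h2 : HasDerivAt (fun y : ℝ => c * y) c x := by
    simpa using (hasDerivAt_id x).const_mul c
  have h3 := h1.comp x h2
  simpa [Function.comp_def, mul_comm] using h3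

end hlp

lemma dui (G G' : ℝ → ℝ → ℝ)
    (hG : Continuous fun p : ℝ × ℝ => G p.1 p.2)
    (hG' : Continuous fun p : ℝ × ℝ => G' p.1 p.2)
    (hd : ∀ x t, HasDerivAt (fun y => G y t) (G' x t) x)
    (c d x₀ : ℝ) :
    HasDerivAt (fun x => ∫ t in c..d, G x t) (∫ t in c..d, G' x₀ t) x₀ := by
  obtain ⟨C, hC⟩ := ((isCompact_Icc (a := x₀ - 1) (b := x₀ + 1)).prod
    (isCompact_uIcc (a := c) (b := d))).exists_bound_of_continuousOn hG'.continuousOn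
  refine (intervalIntegral.hasDerivAt_integral_of_dominated_loc_of_deriv_le
      (F := G) (F' := G') (bound := fun _ => C) (s := Metric.ball x₀ 1) (Metric.ball_mem_nhds x₀ one_pos) ?_ ?_ ?_ ?_ ?_ ?_).2
  · exact .of_forall fun x =>
      ((hG.comp (Continuous.prodMk_right x)).aestronglyMeasurable).restrict
  · exact (hG.comp (Continuous.prodMk_right x₀)).intervalIntegrable c d
  · exact ((hG'.comp (Continuous.prodMk_right x₀)).aestronglyMeasurable).restrict
  · refine .of_forall fun t ht x hx => hC (x, t) ⟨?_, uIoc_subset_uIcc ht⟩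
    rw [Real.ball_eq_Ioo] at hx
    exact Ioo_subset_Icc_self hx
  · exact intervalIntegrable_const
  · exact .of_forall fun t _ x _ => hd x t

lemma cont_param (f : ℝ → ℝ → ℝ → ℝ)
    (hf : Continuous fun p : ℝ × ℝ × ℝ => f p.1 p.2.1 p.2.2) :
    Continuous fun p : ℝ × ℝ => ∫ t in p.2..(1:ℝ), f p.1 p.2 t := by
  have h2 : Continuous fun p : ℝ × ℝ => ∫ t in (1:ℝ)..p.2, f p.1 p.2 t := by
    apply intervalIntegral.continuous_parametric_intervalIntegral_of_continuous
      (X := ℝ × ℝ) (a₀ := 1) (f := fun p t => f p.1 p.2 t) (μ := volume)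
      (s := fun p : ℝ × ℝ => p.2)
    · exact hf.comp ((continuous_fst.fst).prodMk ((continuous_fst.snd).prodMk continuous_snd))
    · exact continuous_snd
  have h3 : (fun p : ℝ × ℝ => ∫ t in p.2..(1:ℝ), f p.1 p.2 t)
      = fun p => -(∫ t in (1:ℝ)..p.2, f p.1 p.2 t) :=
    funext fun p => intervalIntegral.integral_symm 1 p.2
  rw [h3]; exact h2.neg

lemma cont_param_fixed (f : ℝ → ℝ → ℝ)
    (hf : Continuous fun q : ℝ × ℝ => f q.1 q.2) :
    Continuous fun s : ℝ => ∫ t in s..(1:ℝ), f s t := by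
  have h2 : Continuous fun s : ℝ => ∫ t in (1:ℝ)..s, f s t := by
    apply intervalIntegral.continuous_parametric_intervalIntegral_of_continuous
      (X := ℝ) (a₀ := 1) (f := fun s t => f s t) (μ := volume) (s := fun s : ℝ => s)
    · exact hf
    · exact continuous_id
  have h3 : (fun s : ℝ => ∫ t in s..(1:ℝ), f s t)
      = fun s => -(∫ t in (1:ℝ)..s, f s t) :=
    funext fun s => intervalIntegral.integral_symm 1 s
  rw [h3]; exact h2.neg

noncomputable def VV (a₁ L : ℝ) (w : ℝ → ℝ → ℝ) (r x : ℝ) : ℝ :=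
  (L - a₁ * r) * w r ((L - a₁ * r) * x)

noncomputable def DV (a₁ L : ℝ) (w : ℝ → ℝ → ℝ) (r x : ℝ) : ℝ :=
  -a₁ * w r ((L - a₁ * r) * x)
    + (L - a₁ * r) * (pd1 w r ((L - a₁ * r) * x) + -a₁ * x * pd2 w r ((L - a₁ * r) * x))

lemma VV_cont {w : ℝ → ℝ → ℝ} (hwc : Continuous fun p : ℝ × ℝ => w p.1 p.2) (a₁ L : ℝ) :
    Continuous fun p : ℝ × ℝ => VV a₁ L w p.1 p.2 := by
  unfold VV
  have m : Continuous fun p : ℝ × ℝ => (p.1, (L - a₁ * p.1) * p.2) := by fun_prop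
  exact (continuous_const.sub (continuous_const.mul continuous_fst)).mul (hwc.comp m)

lemma DV_cont {w : ℝ → ℝ → ℝ} (hw : ContDiff ℝ (⊤:ℕ∞) (uncurry w)) (a₁ L : ℝ) :
    Continuous fun p : ℝ × ℝ => DV a₁ L w p.1 p.2 := by
  unfold DV
  have m : Continuous fun p : ℝ × ℝ => (p.1, (L - a₁ * p.1) * p.2) := by fun_prop
  exact (continuous_const.mul (hw.continuous.comp m)).add
    ((continuous_const.sub (continuous_const.mul continuous_fst)).mul
      (((cont_pd1 hw).comp m).add
        (((continuous_const.mul continuous_snd)).mul ((cont_pd2 hw).comp m))))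

lemma VV_hasDerivAt {w : ℝ → ℝ → ℝ} (hw : ContDiff ℝ (⊤:ℕ∞) (uncurry w)) (a₁ L r x : ℝ) :
    HasDerivAt (fun y => VV a₁ L w y x) (DV a₁ L w r x) r := by
  have h1 : HasDerivAt (fun y : ℝ => L - a₁ * y) (-a₁) r := by
    simpa [Pi.sub_def] using (hasDerivAt_const r L).sub ((hasDerivAt_id r).const_mul a₁)
  have hγ : HasDerivAt (fun y : ℝ => (L - a₁ * y) * x) (-a₁ * x) r := h1.mul_const x
  have h2 := hasDerivAt_slice hw hγ
  exact h1.mul h2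

lemma cont_prim (M : ℝ → ℝ) (hM : Continuous M) :
    Continuous fun s => ∫ t in s..(1:ℝ), M t := by
  have h1 := intervalIntegral.continuous_primitive
    (fun a b => (hM.intervalIntegrable a b)) 1 (μ := volume)
  have h3 : (fun s => ∫ t in s..(1:ℝ), M t) = fun s => -(∫ t in (1:ℝ)..s, M t) :=
    funext fun s => intervalIntegral.integral_symm 1 s
  rw [h3]; exact h1.neg

lemma core (a₀ a₁ U : ℝ) (hU : 0 < U)
    (P M Hp Hm A B J' K' : ℝ → ℝ)
    (hPc : Continuous P) (hMc : Continuous M) (hHpc : Continuous Hp) (hHmc : Continuous Hm)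
    (hAc : Continuous A) (hBc : Continuous B) (hJ'c : Continuous J') (hK'c : Continuous K')
    (hPnn : ∀ s, 0 ≤ P s) (hMnn : ∀ s, 0 ≤ M s) (hHpnn : ∀ s, 0 ≤ Hp s) (hHmnn : ∀ s, 0 ≤ Hm s)
    (hJd : ∀ s, HasDerivAt (fun x => A x + a₁ * (x * P x)) (J' s) s)
    (hKd : ∀ t, HasDerivAt (fun x => B x - a₁ * (x * M x)) (K' t) t)
    (hAM : ∀ s, 2 * a₀ * (P s * M s) ≤ A s * M s + P s * B s)
    (hA1 : A (-1) ≤ a₁ * P (-1)) (hB1 : B 1 ≤ a₁ * M 1) :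
    (∫ s in (-1:ℝ)..1, ∫ t in s..1,
        ((U * Hp s - J' s) * (U * M t) + (U * P s) * (U * Hm t + K' t)))
      ≤ U * (∫ s in (-1:ℝ)..1, Hp s) * (U * (∫ s in (-1:ℝ)..1, M s))
        + U * (∫ s in (-1:ℝ)..1, Hm s) * (U * (∫ s in (-1:ℝ)..1, P s))
        - 2 * a₀ * (U * ∫ s in (-1:ℝ)..1, P s * M s) := by
  set Q : ℝ → ℝ := fun s => ∫ t in s..1, M t with hQdef
  set Rm : ℝ → ℝ := fun s => ∫ t in s..1, Hm t with hRmdef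
  have hQc : Continuous Q := cont_prim M hMc
  have hRmc : Continuous Rm := cont_prim Hm hHmc
  -- inner integral computation
  have hKint : ∀ s : ℝ, (∫ t in s..1, K' t)
      = (B 1 - a₁ * (1 * M 1)) - (B s - a₁ * (s * M s)) := fun s =>
    intervalIntegral.integral_eq_sub_of_hasDerivAt (fun t _ => hKd t)
      (hK'c.intervalIntegrable s 1)
  have inner_eq : ∀ s : ℝ,
      (∫ t in s..1, ((U * Hp s - J' s) * (U * M t) + (U * P s) * (U * Hm t + K' t)))
      = (U * Hp s - J' s) * (U * Q s)
        + (U * P s) * (U * Rm s + ((B 1 - a₁ * (1 * M 1)) - (B s - a₁ * (s * M s)))) := by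
    intro s
    have i1 : IntervalIntegrable (fun t => (U * Hp s - J' s) * (U * M t)) volume s 1 :=
      (Continuous.intervalIntegrable (by fun_prop) s 1)
    have i2 : IntervalIntegrable (fun t => (U * P s) * (U * Hm t + K' t)) volume s 1 :=
      (Continuous.intervalIntegrable (by fun_prop) s 1)
    rw [intervalIntegral.integral_add i1 i2, intervalIntegral.integral_const_mul,
      intervalIntegral.integral_const_mul, intervalIntegral.integral_const_mul,
      intervalIntegral.integral_add (f := fun t => U * Hm t)
        ((continuous_const.mul hHmc).intervalIntegrable s 1) (hK'c.intervalIntegrable s 1),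
      intervalIntegral.integral_const_mul, hKint s]
  -- rewrite outer integral
  have outer_eq1 : (∫ s in (-1:ℝ)..1, ∫ t in s..1,
        ((U * Hp s - J' s) * (U * M t) + (U * P s) * (U * Hm t + K' t)))
      = ∫ s in (-1:ℝ)..1,
        (U^2 * (Hp s * Q s) + U^2 * (P s * Rm s) + (U * (B 1 - a₁ * (1 * M 1))) * P s
          - U * (J' s * Q s + P s * (B s - a₁ * (s * M s)))) := by
    apply intervalIntegral.integral_congr
    intro s _
    simp only []
    rw [inner_eq s]; ring
  rw [outer_eq1]
  -- integrability of pieces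
  have iHQ : IntervalIntegrable (fun s => U^2 * (Hp s * Q s)) volume (-1) 1 :=
    (Continuous.intervalIntegrable (by fun_prop) _ _)
  have iPR : IntervalIntegrable (fun s => U^2 * (P s * Rm s)) volume (-1) 1 :=
    (Continuous.intervalIntegrable (by fun_prop) _ _)
  have iKP : IntervalIntegrable (fun s => (U * (B 1 - a₁ * (1 * M 1))) * P s) volume (-1) 1 :=
    (Continuous.intervalIntegrable (by fun_prop) _ _)
  have iJQ : IntervalIntegrable (fun s => J' s * Q s) volume (-1) 1 :=
    ((hJ'c.mul hQc).intervalIntegrable _ _)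
  have iPK : IntervalIntegrable (fun s => P s * (B s - a₁ * (s * M s))) volume (-1) 1 :=
    (Continuous.intervalIntegrable (by fun_prop) _ _)
  have iJPK : IntervalIntegrable
      (fun s => U * (J' s * Q s + P s * (B s - a₁ * (s * M s)))) volume (-1) 1 :=
    (Continuous.intervalIntegrable (by fun_prop) _ _)
  rw [intervalIntegral.integral_sub ((iHQ.add iPR).add iKP) iJPK,
    intervalIntegral.integral_add (iHQ.add iPR) iKP,
    intervalIntegral.integral_add iHQ iPR,
    intervalIntegral.integral_const_mul, intervalIntegral.integral_const_mul,
    intervalIntegral.integral_const_mul, intervalIntegral.integral_const_mul,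
    intervalIntegral.integral_add iJQ iPK]
  -- derivative of Q
  have hQd : ∀ s : ℝ, HasDerivAt Q (-(M s)) s := by
    intro s
    have := intervalIntegral.integral_hasDerivAt_left
      (hMc.intervalIntegrable s 1)
      hMc.stronglyMeasurable.stronglyMeasurableAtFilter hMc.continuousAt
    exact this
  -- integration by parts for ∫ J' Q
  have ibp : (∫ s in (-1:ℝ)..1, (J' s * Q s + (A s + a₁ * (s * P s)) * (-(M s))))
      = (A 1 + a₁ * (1 * P 1)) * Q 1 - (A (-1) + a₁ * ((-1) * P (-1))) * Q (-1) := by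
    apply intervalIntegral.integral_eq_sub_of_hasDerivAt (f := fun s => (A s + a₁ * (s * P s)) * Q s)
    · intro s _
      exact (hJd s).mul (hQd s)
    · exact (Continuous.intervalIntegrable (by fun_prop) _ _)
  have hQ1 : Q 1 = 0 := intervalIntegral.integral_same
  have iJM : IntervalIntegrable (fun s => (A s + a₁ * (s * P s)) * (-(M s))) volume (-1) 1 :=
    (Continuous.intervalIntegrable (by fun_prop) _ _)
  have ibp2 : (∫ s in (-1:ℝ)..1, J' s * Q s)
      = (∫ s in (-1:ℝ)..1, (A s + a₁ * (s * P s)) * M s)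
        - (A (-1) + a₁ * ((-1) * P (-1))) * Q (-1) := by
    have e1 := intervalIntegral.integral_add iJQ iJM
    rw [ibp, hQ1] at e1
    have e2 : (∫ s in (-1:ℝ)..1, (A s + a₁ * (s * P s)) * (-(M s)))
        = -(∫ s in (-1:ℝ)..1, (A s + a₁ * (s * P s)) * M s) := by
      rw [← intervalIntegral.integral_neg]
      apply intervalIntegral.integral_congr
      intro s _; ring
    rw [e2] at e1
    linarith [e1]
  rw [ibp2]
  -- bounds
  have hQnn : ∀ s ∈ Icc (-1:ℝ) 1, 0 ≤ Q s := fun s hs =>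
    intervalIntegral.integral_nonneg hs.2 (fun t _ => hMnn t)
  have hQle : ∀ s ∈ Icc (-1:ℝ) 1, Q s ≤ ∫ t in (-1:ℝ)..1, M t := by
    intro s hs
    have hsplit : (∫ t in (-1:ℝ)..s, M t) + (∫ t in s..1, M t) = ∫ t in (-1:ℝ)..1, M t :=
      intervalIntegral.integral_add_adjacent_intervals
        (hMc.intervalIntegrable _ _) (hMc.intervalIntegrable _ _)
    have h0 : 0 ≤ ∫ t in (-1:ℝ)..s, M t :=
      intervalIntegral.integral_nonneg hs.1 (fun t _ => hMnn t)
    simp only [hQdef]; linarith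
  have hRmle : ∀ s ∈ Icc (-1:ℝ) 1, Rm s ≤ ∫ t in (-1:ℝ)..1, Hm t := by
    intro s hs
    have hsplit : (∫ t in (-1:ℝ)..s, Hm t) + (∫ t in s..1, Hm t) = ∫ t in (-1:ℝ)..1, Hm t :=
      intervalIntegral.integral_add_adjacent_intervals
        (hHmc.intervalIntegrable _ _) (hHmc.intervalIntegrable _ _)
    have h0 : 0 ≤ ∫ t in (-1:ℝ)..s, Hm t :=
      intervalIntegral.integral_nonneg hs.1 (fun t _ => hHmnn t)
    simp only [hRmdef]; linarith
  -- term 1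
  have hT1 : (∫ s in (-1:ℝ)..1, Hp s * Q s)
      ≤ (∫ s in (-1:ℝ)..1, Hp s) * (∫ t in (-1:ℝ)..1, M t) := by
    have mono : (∫ s in (-1:ℝ)..1, Hp s * Q s)
        ≤ ∫ s in (-1:ℝ)..1, Hp s * (∫ t in (-1:ℝ)..1, M t) := by
      apply intervalIntegral.integral_mono_on (by norm_num)
        ((hHpc.mul hQc).intervalIntegrable _ _)
        ((hHpc.mul continuous_const).intervalIntegrable _ _)
      intro s hs
      exact mul_le_mul_of_nonneg_left (hQle s hs) (hHpnn s)
    rwa [intervalIntegral.integral_mul_const] at mono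
  -- term 2
  have hT2 : (∫ s in (-1:ℝ)..1, P s * Rm s)
      ≤ (∫ s in (-1:ℝ)..1, P s) * (∫ t in (-1:ℝ)..1, Hm t) := by
    have mono : (∫ s in (-1:ℝ)..1, P s * Rm s)
        ≤ ∫ s in (-1:ℝ)..1, P s * (∫ t in (-1:ℝ)..1, Hm t) := by
      apply intervalIntegral.integral_mono_on (by norm_num)
        ((hPc.mul hRmc).intervalIntegrable _ _)
        ((hPc.mul continuous_const).intervalIntegrable _ _)
      intro s hs
      exact mul_le_mul_of_nonneg_left (hRmle s hs) (hPnn s)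
    rwa [intervalIntegral.integral_mul_const] at mono
  -- term 3 : boundary
  have hPint_nn : 0 ≤ ∫ s in (-1:ℝ)..1, P s :=
    intervalIntegral.integral_nonneg (by norm_num) (fun s _ => hPnn s)
  have hT3 : (U * (B 1 - a₁ * (1 * M 1))) * (∫ s in (-1:ℝ)..1, P s) ≤ 0 := by
    have h1 : B 1 - a₁ * (1 * M 1) ≤ 0 := by nlinarith [hB1]
    have h2 : U * (B 1 - a₁ * (1 * M 1)) ≤ 0 := mul_nonpos_of_nonneg_of_nonpos hU.le h1
    exact mul_nonpos_of_nonpos_of_nonneg h2 hPint_nn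
  -- term 4 : boundary
  have hT4 : U * ((A (-1) + a₁ * ((-1) * P (-1))) * Q (-1)) ≤ 0 := by
    have h1 : A (-1) + a₁ * ((-1) * P (-1)) ≤ 0 := by nlinarith [hA1]
    have h2 : (A (-1) + a₁ * ((-1) * P (-1))) * Q (-1) ≤ 0 :=
      mul_nonpos_of_nonpos_of_nonneg h1 (hQnn (-1) (by norm_num))
    exact mul_nonpos_of_nonneg_of_nonpos hU.le h2
  -- diagonal term
  have hT5 : 2 * a₀ * (∫ s in (-1:ℝ)..1, P s * M s)
      ≤ (∫ s in (-1:ℝ)..1, ((A s + a₁ * (s * P s)) * M s + P s * (B s - a₁ * (s * M s)))) := by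
    have mono : (∫ s in (-1:ℝ)..1, 2 * a₀ * (P s * M s))
        ≤ ∫ s in (-1:ℝ)..1, ((A s + a₁ * (s * P s)) * M s + P s * (B s - a₁ * (s * M s))) := by
      apply intervalIntegral.integral_mono_on (by norm_num)
        ((Continuous.intervalIntegrable (by fun_prop) _ _))
        ((Continuous.intervalIntegrable (by fun_prop) _ _))
      intro s _
      have e : (A s + a₁ * (s * P s)) * M s + P s * (B s - a₁ * (s * M s))
          = A s * M s + P s * B s := by ring
      rw [e]; exact hAM s
    rwa [intervalIntegral.integral_const_mul] at mono
  have hsum : (∫ s in (-1:ℝ)..1, (A s + a₁ * (s * P s)) * M s)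
        + (∫ s in (-1:ℝ)..1, P s * (B s - a₁ * (s * M s)))
      = ∫ s in (-1:ℝ)..1, ((A s + a₁ * (s * P s)) * M s + P s * (B s - a₁ * (s * M s))) :=
    (intervalIntegral.integral_add
      (Continuous.intervalIntegrable (by fun_prop) _ _)
      (Continuous.intervalIntegrable (by fun_prop) _ _)).symm
  -- assemble
  have hT5' : 2 * a₀ * (∫ s in (-1:ℝ)..1, P s * M s)
      ≤ (∫ s in (-1:ℝ)..1, (A s + a₁ * (s * P s)) * M s)
        + (∫ s in (-1:ℝ)..1, P s * (B s - a₁ * (s * M s))) := by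
    rw [hsum]; exact hT5
  have hU2 : (0:ℝ) ≤ U^2 := sq_nonneg U
  nlinarith [mul_le_mul_of_nonneg_left hT1 hU2, mul_le_mul_of_nonneg_left hT2 hU2,
    mul_le_mul_of_nonneg_left hT5' hU.le, hT3, hT4]


/-- **Spacetime higher-integrability estimate.**
Let `0 < a₀ ≤ a ≤ a₁` on `[R₀,R*] × ℝ`, and let `w₊, w₋ ≥ 0` satisfy the transport
inequalities `∂_R w₊ + ∂_θ(a w₊) ≤ h₊` and `∂_R w₋ − ∂_θ(a w₋) ≤ h₋` with `h₊, h₋ ≥ 0`.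
Then for `L > a₁ R*` and every `R ∈ (R₀,R*)`,
`(d/dR) N^I(R) + 2 a₀ N^II(R) ≤ N^III(R)`. -/
theorem higher_integrability
    (R₀ Rs a₀ a₁ L : ℝ) (hR : R₀ < Rs) (ha₀ : 0 < a₀) (ha₀₁ : a₀ ≤ a₁)
    (hL : a₁ * Rs < L)
    (a wp wm hp hm : ℝ → ℝ → ℝ)
    (ha_smooth : ContDiff ℝ (⊤ : ℕ∞) (Function.uncurry a))
    (hwp_smooth : ContDiff ℝ (⊤ : ℕ∞) (Function.uncurry wp))
    (hwm_smooth : ContDiff ℝ (⊤ : ℕ∞) (Function.uncurry wm))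
    (hhp_smooth : ContDiff ℝ (⊤ : ℕ∞) (Function.uncurry hp))
    (hhm_smooth : ContDiff ℝ (⊤ : ℕ∞) (Function.uncurry hm))
    (hab : ∀ r ∈ Set.Icc R₀ Rs, ∀ θ : ℝ, a₀ ≤ a r θ ∧ a r θ ≤ a₁)
    (hwp_nn : ∀ r ∈ Set.Icc R₀ Rs, ∀ θ : ℝ, 0 ≤ wp r θ)
    (hwm_nn : ∀ r ∈ Set.Icc R₀ Rs, ∀ θ : ℝ, 0 ≤ wm r θ)
    (hhp_nn : ∀ r ∈ Set.Icc R₀ Rs, ∀ θ : ℝ, 0 ≤ hp r θ)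
    (hhm_nn : ∀ r ∈ Set.Icc R₀ Rs, ∀ θ : ℝ, 0 ≤ hm r θ)
    (htp : ∀ r ∈ Set.Icc R₀ Rs, ∀ θ : ℝ,
      pd1 wp r θ + pd2 (fun r' θ' => a r' θ' * wp r' θ') r θ ≤ hp r θ)
    (htm : ∀ r ∈ Set.Icc R₀ Rs, ∀ θ : ℝ,
      pd1 wm r θ - pd2 (fun r' θ' => a r' θ' * wm r' θ') r θ ≤ hm r θ) :
    ∀ R ∈ Set.Ioo R₀ Rs,
      deriv (fun r => ∫ θp in (-L + a₁ * r)..(L - a₁ * r),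
          ∫ θm in θp..(L - a₁ * r), wp r θp * wm r θm) R
        + 2 * a₀ * (∫ θ in (-L + a₁ * R)..(L - a₁ * R), wp R θ * wm R θ)
      ≤ (∫ θ in (-L + a₁ * R)..(L - a₁ * R), hp R θ)
          * (∫ θ in (-L + a₁ * R)..(L - a₁ * R), wm R θ)
        + (∫ θ in (-L + a₁ * R)..(L - a₁ * R), hm R θ)
          * (∫ θ in (-L + a₁ * R)..(L - a₁ * R), wp R θ) := by
  intro R hRoo
  obtain ⟨hR1, hR2⟩ := hRoo
  have hRmem : R ∈ Set.Icc R₀ Rs := ⟨hR1.le, hR2.le⟩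
  have ha1 : 0 < a₁ := lt_of_lt_of_le ha₀ ha₀₁
  have hU : 0 < L - a₁ * R := by nlinarith
  have hwpc : Continuous fun p : ℝ × ℝ => wp p.1 p.2 := hwp_smooth.continuous
  have hwmc : Continuous fun p : ℝ × ℝ => wm p.1 p.2 := hwm_smooth.continuous
  have hawp : ContDiff ℝ (⊤:ℕ∞) (uncurry fun r' θ' => a r' θ' * wp r' θ') :=
    ha_smooth.mul hwp_smooth
  have hawm : ContDiff ℝ (⊤:ℕ∞) (uncurry fun r' θ' => a r' θ' * wm r' θ') :=
    ha_smooth.mul hwm_smooth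
  -- Part I : change of variables
  have key : ∀ r : ℝ, 0 < L - a₁ * r →
      (∫ θp in (-L + a₁ * r)..(L - a₁ * r),
          ∫ θm in θp..(L - a₁ * r), wp r θp * wm r θm)
      = ∫ s in (-1:ℝ)..1, ∫ t in s..1, VV a₁ L wp r s * VV a₁ L wm r t := by
    intro r hUr
    have hUne : (L - a₁ * r) ≠ 0 := ne_of_gt hUr
    have inner : ∀ s : ℝ, (∫ t in s..1, VV a₁ L wp r s * VV a₁ L wm r t)
        = (L - a₁ * r) * (wp r ((L - a₁ * r) * s)
            * ∫ θm in ((L - a₁ * r) * s)..(L - a₁ * r), wm r θm) := by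
      intro s
      rw [intervalIntegral.integral_const_mul]
      have h2 : (∫ t in s..1, VV a₁ L wm r t)
          = ∫ θm in ((L - a₁ * r) * s)..(L - a₁ * r), wm r θm := by
        unfold VV
        rw [intervalIntegral.integral_const_mul]
        have hcov := intervalIntegral.smul_integral_comp_mul_left
          (fun θ => wm r θ) (L - a₁ * r) (a := s) (b := 1)
        rw [mul_one, smul_eq_mul] at hcov
        exact hcov
      rw [h2]
      unfold VV; ring
    have hcov2 := intervalIntegral.smul_integral_comp_mul_left
      (fun θ => wp r θ * ∫ θm in θ..(L - a₁ * r), wm r θm) (L - a₁ * r) (a := -1) (b := 1)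
    rw [mul_neg_one, mul_one, smul_eq_mul] at hcov2
    calc (∫ θp in (-L + a₁ * r)..(L - a₁ * r),
            ∫ θm in θp..(L - a₁ * r), wp r θp * wm r θm)
        = ∫ θp in (-(L - a₁ * r))..(L - a₁ * r),
            (wp r θp * ∫ θm in θp..(L - a₁ * r), wm r θm) := by
          rw [show -L + a₁ * r = -(L - a₁ * r) by ring]
          apply intervalIntegral.integral_congr
          intro θp _
          simp only []
          rw [intervalIntegral.integral_const_mul]
      _ = (L - a₁ * r) * ∫ s in (-1:ℝ)..1,
            (wp r ((L - a₁ * r) * s) * ∫ θm in ((L - a₁ * r) * s)..(L - a₁ * r), wm r θm) := by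
          rw [hcov2]
      _ = ∫ s in (-1:ℝ)..1, ∫ t in s..1, VV a₁ L wp r s * VV a₁ L wm r t := by
          rw [← intervalIntegral.integral_const_mul]
          apply intervalIntegral.integral_congr
          intro s _
          simp only []
          rw [inner s]
  -- eventual equality near R
  have hΦΨ : (fun r => ∫ θp in (-L + a₁ * r)..(L - a₁ * r),
        ∫ θm in θp..(L - a₁ * r), wp r θp * wm r θm)
      =ᶠ[nhds R] (fun r => ∫ s in (-1:ℝ)..1, ∫ t in s..1, VV a₁ L wp r s * VV a₁ L wm r t) := by
    have hc : ContinuousAt (fun r : ℝ => L - a₁ * r) R := by fun_prop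
    filter_upwards [hc.preimage_mem_nhds (Ioi_mem_nhds hU)] with r hr
    exact key r hr
  -- Part II : differentiate under the integral
  have hD : deriv (fun r => ∫ θp in (-L + a₁ * r)..(L - a₁ * r),
        ∫ θm in θp..(L - a₁ * r), wp r θp * wm r θm) R
      = ∫ s in (-1:ℝ)..1, ∫ t in s..1,
          (DV a₁ L wp R s * VV a₁ L wm R t + VV a₁ L wp R s * DV a₁ L wm R t) := by
    have hf3 : Continuous fun p : ℝ × ℝ × ℝ => VV a₁ L wp p.1 p.2.1 * VV a₁ L wm p.1 p.2.2 := by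
      have c12 : Continuous fun p : ℝ × ℝ × ℝ => (p.1, p.2.1) := by fun_prop
      have c13 : Continuous fun p : ℝ × ℝ × ℝ => (p.1, p.2.2) := by fun_prop
      exact ((VV_cont hwpc a₁ L).comp c12).mul ((VV_cont hwmc a₁ L).comp c13)
    have hf'3 : Continuous fun p : ℝ × ℝ × ℝ =>
        (DV a₁ L wp p.1 p.2.1 * VV a₁ L wm p.1 p.2.2
          + VV a₁ L wp p.1 p.2.1 * DV a₁ L wm p.1 p.2.2) := by
      have c12 : Continuous fun p : ℝ × ℝ × ℝ => (p.1, p.2.1) := by fun_prop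
      have c13 : Continuous fun p : ℝ × ℝ × ℝ => (p.1, p.2.2) := by fun_prop
      exact (((DV_cont hwp_smooth a₁ L).comp c12).mul ((VV_cont hwmc a₁ L).comp c13)).add
        (((VV_cont hwpc a₁ L).comp c12).mul ((DV_cont hwm_smooth a₁ L).comp c13))
    have hFc : Continuous fun p : ℝ × ℝ =>
        ∫ t in p.2..(1:ℝ), VV a₁ L wp p.1 p.2 * VV a₁ L wm p.1 t :=
      cont_param (fun r s t => VV a₁ L wp r s * VV a₁ L wm r t) hf3
    have hF'c : Continuous fun p : ℝ × ℝ =>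
        ∫ t in p.2..(1:ℝ), (DV a₁ L wp p.1 p.2 * VV a₁ L wm p.1 t
          + VV a₁ L wp p.1 p.2 * DV a₁ L wm p.1 t) :=
      cont_param (fun r s t => DV a₁ L wp r s * VV a₁ L wm r t
        + VV a₁ L wp r s * DV a₁ L wm r t) hf'3
    have hFd : ∀ x s : ℝ, HasDerivAt
        (fun y => ∫ t in s..(1:ℝ), VV a₁ L wp y s * VV a₁ L wm y t)
        (∫ t in s..(1:ℝ), (DV a₁ L wp x s * VV a₁ L wm x t
          + VV a₁ L wp x s * DV a₁ L wm x t)) x := by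
      intro x s
      apply dui (fun y t => VV a₁ L wp y s * VV a₁ L wm y t)
        (fun y t => DV a₁ L wp y s * VV a₁ L wm y t + VV a₁ L wp y s * DV a₁ L wm y t)
      · have c1 : Continuous fun p : ℝ × ℝ => (p.1, s) := by fun_prop
        exact ((VV_cont hwpc a₁ L).comp c1).mul (VV_cont hwmc a₁ L)
      · have c1 : Continuous fun p : ℝ × ℝ => (p.1, s) := by fun_prop
        exact (((DV_cont hwp_smooth a₁ L).comp c1).mul (VV_cont hwmc a₁ L)).add
          (((VV_cont hwpc a₁ L).comp c1).mul (DV_cont hwm_smooth a₁ L))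
      · intro y t
        exact (VV_hasDerivAt hwp_smooth a₁ L y s).mul (VV_hasDerivAt hwm_smooth a₁ L y t)
    have houter := dui
      (fun x s => ∫ t in s..(1:ℝ), VV a₁ L wp x s * VV a₁ L wm x t)
      (fun x s => ∫ t in s..(1:ℝ),
        (DV a₁ L wp x s * VV a₁ L wm x t + VV a₁ L wp x s * DV a₁ L wm x t))
      hFc hF'c hFd (-1) 1 R
    rw [hΦΨ.deriv_eq]
    exact houter.deriv
  -- Part III : estimate
  have mσ : Continuous fun s : ℝ => ((R : ℝ), (L - a₁ * R) * s) := by fun_prop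
  -- transport bounds
  have hbp : ∀ s : ℝ, DV a₁ L wp R s
      ≤ (L - a₁ * R) * hp R ((L - a₁ * R) * s)
        - ((L - a₁ * R) * pd2 (fun r' θ' => a r' θ' * wp r' θ') R ((L - a₁ * R) * s)
            + a₁ * (1 * wp R ((L - a₁ * R) * s)
              + s * ((L - a₁ * R) * pd2 wp R ((L - a₁ * R) * s)))) := by
    intro s
    have ht := htp R hRmem ((L - a₁ * R) * s)
    have h0 : 0 ≤ (L - a₁ * R) * (hp R ((L - a₁ * R) * s)
        - (pd1 wp R ((L - a₁ * R) * s)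
          + pd2 (fun r' θ' => a r' θ' * wp r' θ') R ((L - a₁ * R) * s))) :=
      mul_nonneg hU.le (by linarith)
    have e : ((L - a₁ * R) * hp R ((L - a₁ * R) * s)
        - ((L - a₁ * R) * pd2 (fun r' θ' => a r' θ' * wp r' θ') R ((L - a₁ * R) * s)
            + a₁ * (1 * wp R ((L - a₁ * R) * s)
              + s * ((L - a₁ * R) * pd2 wp R ((L - a₁ * R) * s)))))
          - DV a₁ L wp R s
        = (L - a₁ * R) * (hp R ((L - a₁ * R) * s)
            - (pd1 wp R ((L - a₁ * R) * s)
              + pd2 (fun r' θ' => a r' θ' * wp r' θ') R ((L - a₁ * R) * s))) := by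
      unfold DV; ring
    linarith [e, h0]
  have hbm : ∀ t : ℝ, DV a₁ L wm R t
      ≤ (L - a₁ * R) * hm R ((L - a₁ * R) * t)
        + ((L - a₁ * R) * pd2 (fun r' θ' => a r' θ' * wm r' θ') R ((L - a₁ * R) * t)
            - a₁ * (1 * wm R ((L - a₁ * R) * t)
              + t * ((L - a₁ * R) * pd2 wm R ((L - a₁ * R) * t)))) := by
    intro t
    have ht := htm R hRmem ((L - a₁ * R) * t)
    have h0 : 0 ≤ (L - a₁ * R) * (hm R ((L - a₁ * R) * t)
        - (pd1 wm R ((L - a₁ * R) * t)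
          - pd2 (fun r' θ' => a r' θ' * wm r' θ') R ((L - a₁ * R) * t))) :=
      mul_nonneg hU.le (by linarith)
    have e : ((L - a₁ * R) * hm R ((L - a₁ * R) * t)
        + ((L - a₁ * R) * pd2 (fun r' θ' => a r' θ' * wm r' θ') R ((L - a₁ * R) * t)
            - a₁ * (1 * wm R ((L - a₁ * R) * t)
              + t * ((L - a₁ * R) * pd2 wm R ((L - a₁ * R) * t)))))
          - DV a₁ L wm R t
        = (L - a₁ * R) * (hm R ((L - a₁ * R) * t)
            - (pd1 wm R ((L - a₁ * R) * t)
              - pd2 (fun r' θ' => a r' θ' * wm r' θ') R ((L - a₁ * R) * t))) := by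
      unfold DV; ring
    linarith [e, h0]
  -- pointwise bound on the integrand
  have hpt : ∀ s t : ℝ,
      DV a₁ L wp R s * VV a₁ L wm R t + VV a₁ L wp R s * DV a₁ L wm R t
      ≤ ((L - a₁ * R) * hp R ((L - a₁ * R) * s)
          - ((L - a₁ * R) * pd2 (fun r' θ' => a r' θ' * wp r' θ') R ((L - a₁ * R) * s)
              + a₁ * (1 * wp R ((L - a₁ * R) * s)
                + s * ((L - a₁ * R) * pd2 wp R ((L - a₁ * R) * s)))))
          * ((L - a₁ * R) * wm R ((L - a₁ * R) * t))
        + ((L - a₁ * R) * wp R ((L - a₁ * R) * s))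
          * ((L - a₁ * R) * hm R ((L - a₁ * R) * t)
            + ((L - a₁ * R) * pd2 (fun r' θ' => a r' θ' * wm r' θ') R ((L - a₁ * R) * t)
                - a₁ * (1 * wm R ((L - a₁ * R) * t)
                  + t * ((L - a₁ * R) * pd2 wm R ((L - a₁ * R) * t))))) := by
    intro s t
    have hVm : 0 ≤ (L - a₁ * R) * wm R ((L - a₁ * R) * t) :=
      mul_nonneg hU.le (hwm_nn R hRmem _)
    have hVp : 0 ≤ (L - a₁ * R) * wp R ((L - a₁ * R) * s) :=
      mul_nonneg hU.le (hwp_nn R hRmem _)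
    have h1 := mul_le_mul_of_nonneg_right (hbp s) hVm
    have h2 := mul_le_mul_of_nonneg_left (hbm t) hVp
    have eVm : VV a₁ L wm R t = (L - a₁ * R) * wm R ((L - a₁ * R) * t) := rfl
    have eVp : VV a₁ L wp R s = (L - a₁ * R) * wp R ((L - a₁ * R) * s) := rfl
    rw [eVm, eVp]
    linarith [h1, h2]
  -- continuity of the majorant (as a function of (s,t))
  have m1 : Continuous fun q : ℝ × ℝ => ((R : ℝ), (L - a₁ * R) * q.1) := by fun_prop
  have m2 : Continuous fun q : ℝ × ℝ => ((R : ℝ), (L - a₁ * R) * q.2) := by fun_prop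
  have hg2 : Continuous fun q : ℝ × ℝ =>
      ((L - a₁ * R) * hp R ((L - a₁ * R) * q.1)
          - ((L - a₁ * R) * pd2 (fun r' θ' => a r' θ' * wp r' θ') R ((L - a₁ * R) * q.1)
              + a₁ * (1 * wp R ((L - a₁ * R) * q.1)
                + q.1 * ((L - a₁ * R) * pd2 wp R ((L - a₁ * R) * q.1)))))
          * ((L - a₁ * R) * wm R ((L - a₁ * R) * q.2))
        + ((L - a₁ * R) * wp R ((L - a₁ * R) * q.1))
          * ((L - a₁ * R) * hm R ((L - a₁ * R) * q.2)
            + ((L - a₁ * R) * pd2 (fun r' θ' => a r' θ' * wm r' θ') R ((L - a₁ * R) * q.2)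
                - a₁ * (1 * wm R ((L - a₁ * R) * q.2)
                  + q.2 * ((L - a₁ * R) * pd2 wm R ((L - a₁ * R) * q.2))))) := by
    refine Continuous.add (Continuous.mul ?_ ?_) (Continuous.mul ?_ ?_)
    · exact (continuous_const.mul (hhp_smooth.continuous.comp m1)).sub
        ((continuous_const.mul ((cont_pd2 hawp).comp m1)).add
          (continuous_const.mul ((continuous_const.mul (hwpc.comp m1)).add
            (continuous_fst.mul (continuous_const.mul ((cont_pd2 hwp_smooth).comp m1))))))
    · exact continuous_const.mul (hwmc.comp m2)
    · exact continuous_const.mul (hwpc.comp m1)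
    · exact (continuous_const.mul (hhm_smooth.continuous.comp m2)).add
        ((continuous_const.mul ((cont_pd2 hawm).comp m2)).sub
          (continuous_const.mul ((continuous_const.mul (hwmc.comp m2)).add
            (continuous_snd.mul (continuous_const.mul ((cont_pd2 hwm_smooth).comp m2))))))
  -- continuity of integrand f' (3 variables), reused from Part II shape
  have hf'3 : Continuous fun p : ℝ × ℝ × ℝ =>
      (DV a₁ L wp p.1 p.2.1 * VV a₁ L wm p.1 p.2.2
        + VV a₁ L wp p.1 p.2.1 * DV a₁ L wm p.1 p.2.2) := by
    have c12 : Continuous fun p : ℝ × ℝ × ℝ => (p.1, p.2.1) := by fun_prop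
    have c13 : Continuous fun p : ℝ × ℝ × ℝ => (p.1, p.2.2) := by fun_prop
    exact (((DV_cont hwp_smooth a₁ L).comp c12).mul ((VV_cont hwmc a₁ L).comp c13)).add
      (((VV_cont hwpc a₁ L).comp c12).mul ((DV_cont hwm_smooth a₁ L).comp c13))
  -- monotonicity of the iterated integral
  have hmono : (∫ s in (-1:ℝ)..1, ∫ t in s..1,
        (DV a₁ L wp R s * VV a₁ L wm R t + VV a₁ L wp R s * DV a₁ L wm R t))
      ≤ ∫ s in (-1:ℝ)..1, ∫ t in s..1,
        (((L - a₁ * R) * hp R ((L - a₁ * R) * s)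
          - ((L - a₁ * R) * pd2 (fun r' θ' => a r' θ' * wp r' θ') R ((L - a₁ * R) * s)
              + a₁ * (1 * wp R ((L - a₁ * R) * s)
                + s * ((L - a₁ * R) * pd2 wp R ((L - a₁ * R) * s)))))
          * ((L - a₁ * R) * wm R ((L - a₁ * R) * t))
        + ((L - a₁ * R) * wp R ((L - a₁ * R) * s))
          * ((L - a₁ * R) * hm R ((L - a₁ * R) * t)
            + ((L - a₁ * R) * pd2 (fun r' θ' => a r' θ' * wm r' θ') R ((L - a₁ * R) * t)
                - a₁ * (1 * wm R ((L - a₁ * R) * t)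
                  + t * ((L - a₁ * R) * pd2 wm R ((L - a₁ * R) * t)))))) := by
    have hf'2 : Continuous fun q : ℝ × ℝ =>
        (DV a₁ L wp R q.1 * VV a₁ L wm R q.2 + VV a₁ L wp R q.1 * DV a₁ L wm R q.2) :=
      hf'3.comp (continuous_const.prodMk (continuous_fst.prodMk continuous_snd))
    have c_out1 : Continuous fun s : ℝ => ∫ t in s..(1:ℝ),
        (DV a₁ L wp R s * VV a₁ L wm R t + VV a₁ L wp R s * DV a₁ L wm R t) :=
      cont_param_fixed (fun s t => DV a₁ L wp R s * VV a₁ L wm R t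
        + VV a₁ L wp R s * DV a₁ L wm R t) hf'2
    have c_out2 : Continuous fun s : ℝ => ∫ t in s..(1:ℝ),
        (((L - a₁ * R) * hp R ((L - a₁ * R) * s)
          - ((L - a₁ * R) * pd2 (fun r' θ' => a r' θ' * wp r' θ') R ((L - a₁ * R) * s)
              + a₁ * (1 * wp R ((L - a₁ * R) * s)
                + s * ((L - a₁ * R) * pd2 wp R ((L - a₁ * R) * s)))))
          * ((L - a₁ * R) * wm R ((L - a₁ * R) * t))
        + ((L - a₁ * R) * wp R ((L - a₁ * R) * s))
          * ((L - a₁ * R) * hm R ((L - a₁ * R) * t)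
            + ((L - a₁ * R) * pd2 (fun r' θ' => a r' θ' * wm r' θ') R ((L - a₁ * R) * t)
                - a₁ * (1 * wm R ((L - a₁ * R) * t)
                  + t * ((L - a₁ * R) * pd2 wm R ((L - a₁ * R) * t)))))) :=
      cont_param_fixed _ hg2
    apply intervalIntegral.integral_mono_on (by norm_num)
      (c_out1.intervalIntegrable _ _) (c_out2.intervalIntegrable _ _)
    intro s hs
    have c_in1 : Continuous fun t : ℝ =>
        (DV a₁ L wp R s * VV a₁ L wm R t + VV a₁ L wp R s * DV a₁ L wm R t) :=
      hf'3.comp (continuous_const.prodMk (continuous_const.prodMk continuous_id))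
    have c_in2 : Continuous fun t : ℝ =>
        (((L - a₁ * R) * hp R ((L - a₁ * R) * s)
          - ((L - a₁ * R) * pd2 (fun r' θ' => a r' θ' * wp r' θ') R ((L - a₁ * R) * s)
              + a₁ * (1 * wp R ((L - a₁ * R) * s)
                + s * ((L - a₁ * R) * pd2 wp R ((L - a₁ * R) * s)))))
          * ((L - a₁ * R) * wm R ((L - a₁ * R) * t))
        + ((L - a₁ * R) * wp R ((L - a₁ * R) * s))
          * ((L - a₁ * R) * hm R ((L - a₁ * R) * t)
            + ((L - a₁ * R) * pd2 (fun r' θ' => a r' θ' * wm r' θ') R ((L - a₁ * R) * t)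
                - a₁ * (1 * wm R ((L - a₁ * R) * t)
                  + t * ((L - a₁ * R) * pd2 wm R ((L - a₁ * R) * t)))))) :=
      hg2.comp (continuous_const.prodMk continuous_id)
    apply intervalIntegral.integral_mono_on hs.2
      (c_in1.intervalIntegrable _ _) (c_in2.intervalIntegrable _ _)
    intro t _
    exact hpt s t
  -- apply the core estimate
  have mσ1 : Continuous fun s : ℝ => ((R : ℝ), (L - a₁ * R) * s) := by fun_prop
  have hcore := core a₀ a₁ (L - a₁ * R) hU
    (fun s => wp R ((L - a₁ * R) * s)) (fun t => wm R ((L - a₁ * R) * t))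
    (fun s => hp R ((L - a₁ * R) * s)) (fun t => hm R ((L - a₁ * R) * t))
    (fun s => a R ((L - a₁ * R) * s) * wp R ((L - a₁ * R) * s))
    (fun t => a R ((L - a₁ * R) * t) * wm R ((L - a₁ * R) * t))
    (fun s => (L - a₁ * R) * pd2 (fun r' θ' => a r' θ' * wp r' θ') R ((L - a₁ * R) * s)
        + a₁ * (1 * wp R ((L - a₁ * R) * s)
          + s * ((L - a₁ * R) * pd2 wp R ((L - a₁ * R) * s))))
    (fun t => (L - a₁ * R) * pd2 (fun r' θ' => a r' θ' * wm r' θ') R ((L - a₁ * R) * t)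
        - a₁ * (1 * wm R ((L - a₁ * R) * t)
          + t * ((L - a₁ * R) * pd2 wm R ((L - a₁ * R) * t))))
    (hwpc.comp mσ1) (hwmc.comp mσ1)
    (hhp_smooth.continuous.comp mσ1) (hhm_smooth.continuous.comp mσ1)
    ((ha_smooth.continuous.comp mσ1).mul (hwpc.comp mσ1))
    ((ha_smooth.continuous.comp mσ1).mul (hwmc.comp mσ1))
    ((continuous_const.mul ((cont_pd2 hawp).comp mσ1)).add
      (continuous_const.mul ((continuous_const.mul (hwpc.comp mσ1)).add
        (continuous_id.mul (continuous_const.mul ((cont_pd2 hwp_smooth).comp mσ1))))))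
    ((continuous_const.mul ((cont_pd2 hawm).comp mσ1)).sub
      (continuous_const.mul ((continuous_const.mul (hwmc.comp mσ1)).add
        (continuous_id.mul (continuous_const.mul ((cont_pd2 hwm_smooth).comp mσ1))))))
    (fun s => hwp_nn R hRmem _) (fun t => hwm_nn R hRmem _)
    (fun s => hhp_nn R hRmem _) (fun t => hhm_nn R hRmem _)
    (fun s => (hasDerivAt_sect hawp R (L - a₁ * R) s).add
      (((hasDerivAt_id s).mul (hasDerivAt_sect hwp_smooth R (L - a₁ * R) s)).const_mul a₁))
    (fun t => (hasDerivAt_sect hawm R (L - a₁ * R) t).sub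
      (((hasDerivAt_id t).mul (hasDerivAt_sect hwm_smooth R (L - a₁ * R) t)).const_mul a₁))
    (fun s => by
      have h1 := (hab R hRmem ((L - a₁ * R) * s)).1
      have h2 := mul_nonneg (hwp_nn R hRmem ((L - a₁ * R) * s))
        (hwm_nn R hRmem ((L - a₁ * R) * s))
      nlinarith)
    (by
      have h1 := (hab R hRmem ((L - a₁ * R) * (-1))).2
      have h2 := hwp_nn R hRmem ((L - a₁ * R) * (-1))
      nlinarith)
    (by
      have h1 := (hab R hRmem ((L - a₁ * R) * 1)).2
      have h2 := hwm_nn R hRmem ((L - a₁ * R) * 1)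
      nlinarith)
  -- change of variables back to θ
  have cov : ∀ k : ℝ → ℝ, (L - a₁ * R) * (∫ s in (-1:ℝ)..1, k ((L - a₁ * R) * s))
      = ∫ θ in (-(L - a₁ * R))..(L - a₁ * R), k θ := by
    intro k
    have h := intervalIntegral.smul_integral_comp_mul_left k (L - a₁ * R) (a := -1) (b := 1)
    rw [mul_neg_one, mul_one, smul_eq_mul] at h
    exact h
  have hchain := le_trans hmono hcore
  rw [show -L + a₁ * R = -(L - a₁ * R) by ring, hD,
    ← cov (fun θ => wp R θ * wm R θ), ← cov (fun θ => hp R θ), ← cov (fun θ => wm R θ),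
    ← cov (fun θ => hm R θ), ← cov (fun θ => wp R θ)]
  linarith [hchain]
end

section
/- Let H, N : ℝ → ℝ be continuous and 2π-periodic with N(θ) ≤ 0 for all θ, and let λ : ℝ → ℝ be continuously differentiable and 2π-periodic with λ'(θ) = H(θ) λ(θ) + N(θ) for all θ. Then either λ(θ) ≠ 0 for all θ ∈ ℝ, or else λ ≡ 0 and N ≡ 0. -/
/-- **ODE dichotomy for periodic linear equations with sign-definite source.**
If `H, N : ℝ → ℝ` are continuous and `2π`-periodic with `N ≤ 0`, and `λ` is a
`C¹` `2π`-periodic solution of `λ' = H λ + N`, then either `λ` never vanishes,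
or `λ ≡ 0` and `N ≡ 0`. -/
theorem periodic_ode_dichotomy
    (H N lam : ℝ → ℝ)
    (hH : Continuous H) (hN : Continuous N)
    (hHper : ∀ θ : ℝ, H (θ + 2 * Real.pi) = H θ)
    (hNper : ∀ θ : ℝ, N (θ + 2 * Real.pi) = N θ)
    (hNnonpos : ∀ θ : ℝ, N θ ≤ 0)
    (hlam : ContDiff ℝ 1 lam)
    (hlamper : ∀ θ : ℝ, lam (θ + 2 * Real.pi) = lam θ)
    (hode : ∀ θ : ℝ, deriv lam θ = H θ * lam θ + N θ) :
    (∀ θ : ℝ, lam θ ≠ 0) ∨ ((∀ θ : ℝ, lam θ = 0) ∧ (∀ θ : ℝ, N θ = 0)) := by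
  by_cases hvan : ∃ θ₀, lam θ₀ = 0
  · obtain ⟨θ₀, hθ₀⟩ := hvan
    right
    have hper : Function.Periodic lam (2 * Real.pi) := hlamper
    have hlamdiff : Differentiable ℝ lam := hlam.differentiable one_ne_zero
    set g : ℝ → ℝ := fun θ => ∫ t in (0:ℝ)..θ, H t with hgdef
    have hgderiv : ∀ θ : ℝ, HasDerivAt g (H θ) θ := by
      intro θ
      exact intervalIntegral.integral_hasDerivAt_right (hH.intervalIntegrable _ _)
        (hH.stronglyMeasurableAtFilter _ _) hH.continuousAt
    set μ : ℝ → ℝ := fun θ => Real.exp (-(g θ)) * lam θ with hμdef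
    have hμderiv : ∀ θ : ℝ, HasDerivAt μ (Real.exp (-(g θ)) * N θ) θ := by
      intro θ
      have h1 : HasDerivAt (fun θ => Real.exp (-(g θ)))
          (Real.exp (-(g θ)) * (-(H θ))) θ := ((hgderiv θ).neg).exp
      have h2 : HasDerivAt lam (H θ * lam θ + N θ) θ := by
        have := (hlamdiff θ).hasDerivAt
        rwa [hode θ] at this
      have : HasDerivAt (fun θ => Real.exp (-(g θ)) * lam θ) (Real.exp (-(g θ)) * (-(H θ)) * lam θ
          + Real.exp (-(g θ)) * (H θ * lam θ + N θ)) θ := h1.mul h2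
      convert this using 1
      ring
    have hμanti : Antitone μ := by
      apply antitone_of_deriv_nonpos
      · exact fun θ => (hμderiv θ).differentiableAt
      · intro θ
        rw [(hμderiv θ).deriv]
        exact mul_nonpos_of_nonneg_of_nonpos (Real.exp_nonneg _) (hNnonpos θ)
    have hμ0 : μ θ₀ = 0 := by simp [hμdef, hθ₀]
    have hμ1 : μ (θ₀ + 2 * Real.pi) = 0 := by simp [hμdef, hlamper, hθ₀]
    have hlamIcc : ∀ θ ∈ Set.Icc θ₀ (θ₀ + 2 * Real.pi), lam θ = 0 := by
      rintro θ ⟨h1, h2⟩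
      have ha := hμanti h1
      have hb := hμanti h2
      have hμθ : μ θ = 0 := le_antisymm (hμ0 ▸ ha) (hμ1 ▸ hb)
      have hexp : Real.exp (-(g θ)) ≠ 0 := Real.exp_ne_zero _
      have : Real.exp (-(g θ)) * lam θ = 0 := hμθ
      exact (mul_eq_zero.mp this).resolve_left hexp
    have hlamzero : ∀ θ : ℝ, lam θ = 0 := by
      intro θ
      have hp : (0:ℝ) < 2 * Real.pi := by positivity
      have hm := toIcoMod_mem_Ico hp θ₀ θ
      have heq : lam (toIcoMod hp θ₀ θ) = lam θ := by
        rw [toIcoMod]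
        exact hper.sub_zsmul_eq _
      rw [← heq]
      exact hlamIcc _ ⟨hm.1, hm.2.le⟩
    refine ⟨hlamzero, fun θ => ?_⟩
    have hdz : deriv lam θ = 0 := by
      have hfun : lam = fun _ => 0 := funext hlamzero
      rw [hfun]; simp
    have h := hode θ
    rw [hdz, hlamzero θ] at h
    linarith
  · left
    push_neg at hvan
    exact hvan
end

section
/- Let R : [τ₀,τ₁) × ℝ → ℝ be smooth, 2π-periodic in the second variable ξ, with R_ττ − R_ξξ ≥ 0 everywhere, and suppose R_u(τ₀,ξ) > 0 and R_v(τ₀,ξ) > 0 for all ξ, where R_u := R_τ − R_ξ and R_v := R_τ + R_ξ. Then for all τ ∈ [τ₀,τ₁) and all ξ: (i) R_u(τ,ξ) ≥ inf_{ξ'} R_u(τ₀,ξ') and R_v(τ,ξ) ≥ inf_{ξ'} R_v(τ₀,ξ'); (ii) R_τ(τ,ξ) ≥ (1/2)(inf_{ξ'} R_u(τ₀,ξ') + inf_{ξ'} R_v(τ₀,ξ')) > 0, so R is strictly increasing in τ; (iii) R(τ,ξ) ≥ inf_{ξ'} R(τ₀,ξ'); (iv) (R_τ² − R_ξ²)(τ,ξ)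 ≥ (inf_{ξ'} R_u(τ₀,ξ'))·(inf_{ξ'} R_v(τ₀,ξ')). -/
/-- A continuous `2π`-periodic real function attains a global minimum. -/
lemma periodic_exists_min {g : ℝ → ℝ} (hc : Continuous g)
    (hp : Function.Periodic g (2 * Real.pi)) : ∃ x₀ : ℝ, ∀ x, g x₀ ≤ g x := by
  have h2π : (0:ℝ) < 2 * Real.pi := by positivity
  obtain ⟨x₀, hx₀, hmin⟩ := isCompact_Icc.exists_isMinOn
    (s := Set.Icc (0:ℝ) (2 * Real.pi)) ⟨0, le_refl _, h2π.le⟩ hc.continuousOn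
  refine ⟨x₀, fun x => ?_⟩
  obtain ⟨y, hy, hxy⟩ := hp.exists_mem_Ico₀ h2π x
  rw [hxy]
  exact hmin (Set.Ico_subset_Icc_self hy)

/-- **Monotonicity of the area function in conformal coordinates.**
If `R` is smooth, `2π`-periodic in `ξ`, satisfies `R_ττ − R_ξξ ≥ 0` on the strip,
and `R_u(τ₀,·) > 0`, `R_v(τ₀,·) > 0` (with `R_u = R_τ − R_ξ`, `R_v = R_τ + R_ξ`),
then: (i) `R_u, R_v` are bounded below by their initial infima; (ii) `R_τ` is bounded
below by the positive quantity `(1/2)(inf R_u(τ₀,·) + inf R_v(τ₀,·))` and `R` is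
strictly increasing in `τ`; (iii) `R ≥ inf R(τ₀,·)`; (iv) `R_τ² − R_ξ² ≥
inf R_u(τ₀,·) · inf R_v(τ₀,·)`. -/
theorem area_function_monotonicity
    (τ₀ τ₁ : ℝ) (hτ : τ₀ < τ₁) (R : ℝ → ℝ → ℝ)
    (hsmooth : ContDiff ℝ (⊤ : ℕ∞) (Function.uncurry R))
    (hper : ∀ τ ξ : ℝ, R τ (ξ + 2 * Real.pi) = R τ ξ)
    (hwave : ∀ τ ∈ Set.Ico τ₀ τ₁, ∀ ξ : ℝ, 0 ≤ pd1 (pd1 R) τ ξ - pd2 (pd2 R) τ ξ)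
    (hu : ∀ ξ : ℝ, 0 < pd1 R τ₀ ξ - pd2 R τ₀ ξ)
    (hv : ∀ ξ : ℝ, 0 < pd1 R τ₀ ξ + pd2 R τ₀ ξ) :
    ∀ τ ∈ Set.Ico τ₀ τ₁, ∀ ξ : ℝ,
      ((⨅ ξ' : ℝ, (pd1 R τ₀ ξ' - pd2 R τ₀ ξ')) ≤ pd1 R τ ξ - pd2 R τ ξ ∧
        (⨅ ξ' : ℝ, (pd1 R τ₀ ξ' + pd2 R τ₀ ξ')) ≤ pd1 R τ ξ + pd2 R τ ξ) ∧
      ((1 / 2) * ((⨅ ξ' : ℝ, (pd1 R τ₀ ξ' - pd2 R τ₀ ξ'))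
            + (⨅ ξ' : ℝ, (pd1 R τ₀ ξ' + pd2 R τ₀ ξ'))) ≤ pd1 R τ ξ ∧
        0 < (1 / 2) * ((⨅ ξ' : ℝ, (pd1 R τ₀ ξ' - pd2 R τ₀ ξ'))
            + (⨅ ξ' : ℝ, (pd1 R τ₀ ξ' + pd2 R τ₀ ξ'))) ∧
        StrictMonoOn (fun s => R s ξ) (Set.Ico τ₀ τ₁)) ∧
      ((⨅ ξ' : ℝ, R τ₀ ξ') ≤ R τ ξ) ∧
      ((⨅ ξ' : ℝ, (pd1 R τ₀ ξ' - pd2 R τ₀ ξ'))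
          * (⨅ ξ' : ℝ, (pd1 R τ₀ ξ' + pd2 R τ₀ ξ'))
        ≤ (pd1 R τ ξ) ^ 2 - (pd2 R τ ξ) ^ 2) := by
  classical
  set f : ℝ × ℝ → ℝ := Function.uncurry R with hf
  have hd : Differentiable ℝ f := hsmooth.differentiable (by simp)
  set D : ℝ × ℝ → (ℝ × ℝ) →L[ℝ] ℝ := fderiv ℝ f with hDdef
  have hD : ∀ p : ℝ × ℝ, HasFDerivAt f (D p) p := fun p => (hd p).hasFDerivAt
  have hDsm : ContDiff ℝ (⊤ : ℕ∞) D := (contDiff_infty_iff_fderiv.mp hsmooth).2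
  have hDdiff : Differentiable ℝ D := hDsm.differentiable (by simp)
  set D2 : ℝ × ℝ → (ℝ × ℝ) →L[ℝ] (ℝ × ℝ) →L[ℝ] ℝ := fderiv ℝ D with hD2def
  have hD2 : ∀ p : ℝ × ℝ, HasFDerivAt D (D2 p) p := fun p => (hDdiff p).hasFDerivAt
  have hsymm : ∀ (p : ℝ × ℝ) (v w : ℝ × ℝ), D2 p v w = D2 p w v :=
    fun p v w => second_derivative_symmetric hD (hD2 p) v w
  -- first derivatives as directional derivatives
  have key1 : ∀ x y : ℝ, HasDerivAt (fun s => R s y) (D (x, y) ((1:ℝ), (0:ℝ))) x := by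
    intro x y
    have hγ : HasDerivAt (fun s : ℝ => (s, y)) ((1:ℝ), (0:ℝ)) x :=
      (hasDerivAt_id x).prodMk (hasDerivAt_const x y)
    simpa [Function.comp_def, hf] using (hD (x, y)).comp_hasDerivAt x hγ
  have key2 : ∀ x y : ℝ, HasDerivAt (fun s => R x s) (D (x, y) ((0:ℝ), (1:ℝ))) y := by
    intro x y
    have hγ : HasDerivAt (fun s : ℝ => (x, s)) ((0:ℝ), (1:ℝ)) y :=
      (hasDerivAt_const y x).prodMk (hasDerivAt_id y)
    simpa [Function.comp_def, hf] using (hD (x, y)).comp_hasDerivAt y hγ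
  have heq1 : ∀ x y : ℝ, pd1 R x y = D (x, y) ((1:ℝ), (0:ℝ)) := fun x y => (key1 x y).deriv
  have heq2 : ∀ x y : ℝ, pd2 R x y = D (x, y) ((0:ℝ), (1:ℝ)) := fun x y => (key2 x y).deriv
  -- second derivatives
  have dirD : ∀ (v : ℝ × ℝ) (p : ℝ × ℝ), HasFDerivAt (fun q => D q v)
      ((ContinuousLinearMap.apply ℝ ℝ v).comp (D2 p)) p :=
    fun v p => ((ContinuousLinearMap.apply ℝ ℝ v).hasFDerivAt).comp p (hD2 p)
  have key11 : ∀ x y : ℝ, pd1 (pd1 R) x y = D2 (x, y) ((1:ℝ), (0:ℝ)) ((1:ℝ), (0:ℝ)) := by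
    intro x y
    have hγ : HasDerivAt (fun s : ℝ => (s, y)) ((1:ℝ), (0:ℝ)) x :=
      (hasDerivAt_id x).prodMk (hasDerivAt_const x y)
    have h1 : HasDerivAt (fun s => D (s, y) ((1:ℝ), (0:ℝ)))
        (D2 (x, y) ((1:ℝ), (0:ℝ)) ((1:ℝ), (0:ℝ))) x := by
      simpa [Function.comp_def] using (dirD ((1:ℝ), (0:ℝ)) (x, y)).comp_hasDerivAt x hγ
    have : (fun s => pd1 R s y) = fun s => D (s, y) ((1:ℝ), (0:ℝ)) := by
      funext s; exact heq1 s y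
    rw [pd1, this]
    exact h1.deriv
  have key22 : ∀ x y : ℝ, pd2 (pd2 R) x y = D2 (x, y) ((0:ℝ), (1:ℝ)) ((0:ℝ), (1:ℝ)) := by
    intro x y
    have hγ : HasDerivAt (fun s : ℝ => (x, s)) ((0:ℝ), (1:ℝ)) y :=
      (hasDerivAt_const y x).prodMk (hasDerivAt_id y)
    have h1 : HasDerivAt (fun s => D (x, s) ((0:ℝ), (1:ℝ)))
        (D2 (x, y) ((0:ℝ), (1:ℝ)) ((0:ℝ), (1:ℝ))) y := by
      simpa [Function.comp_def] using (dirD ((0:ℝ), (1:ℝ)) (x, y)).comp_hasDerivAt y hγ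
    have : (fun s => pd2 R x s) = fun s => D (x, s) ((0:ℝ), (1:ℝ)) := by
      funext s; exact heq2 x s
    rw [pd2, this]
    exact h1.deriv
  -- algebraic identities on D
  have hsub' : ∀ p : ℝ × ℝ, D p ((1:ℝ), (-1:ℝ)) = D p ((1:ℝ), (0:ℝ)) - D p ((0:ℝ), (1:ℝ)) := by
    intro p
    have e : ((1:ℝ), (-1:ℝ)) = ((1:ℝ), (0:ℝ)) - ((0:ℝ), (1:ℝ)) := by
      simp [Prod.ext_iff]
    rw [e, map_sub]
  have hadd' : ∀ p : ℝ × ℝ, D p ((1:ℝ), (1:ℝ)) = D p ((1:ℝ), (0:ℝ)) + D p ((0:ℝ), (1:ℝ)) := by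
    intro p
    have e : ((1:ℝ), (1:ℝ)) = ((1:ℝ), (0:ℝ)) + ((0:ℝ), (1:ℝ)) := by
      simp [Prod.ext_iff]
    rw [e, map_add]
  -- the wave inequality along characteristics
  have hwaveD : ∀ τ ∈ Set.Ico τ₀ τ₁, ∀ y : ℝ,
      0 ≤ D2 (τ, y) ((1:ℝ), (1:ℝ)) ((1:ℝ), (-1:ℝ)) := by
    intro τ hmem y
    have hw := hwave τ hmem y
    rw [key11, key22] at hw
    have e1 : ((1:ℝ), (1:ℝ)) = ((1:ℝ), (0:ℝ)) + ((0:ℝ), (1:ℝ)) := by simp [Prod.ext_iff]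
    have e2 : ((1:ℝ), (-1:ℝ)) = ((1:ℝ), (0:ℝ)) - ((0:ℝ), (1:ℝ)) := by simp [Prod.ext_iff]
    have hs := hsymm (τ, y) ((1:ℝ), (0:ℝ)) ((0:ℝ), (1:ℝ))
    calc (0:ℝ) ≤ D2 (τ, y) ((1:ℝ), (0:ℝ)) ((1:ℝ), (0:ℝ))
          - D2 (τ, y) ((0:ℝ), (1:ℝ)) ((0:ℝ), (1:ℝ)) := hw
      _ = D2 (τ, y) ((1:ℝ), (1:ℝ)) ((1:ℝ), (-1:ℝ)) := by
          rw [e1, e2, map_add]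
          simp only [ContinuousLinearMap.add_apply, map_sub]
          linarith [hs]
  have hwaveD' : ∀ τ ∈ Set.Ico τ₀ τ₁, ∀ y : ℝ,
      0 ≤ D2 (τ, y) ((1:ℝ), (-1:ℝ)) ((1:ℝ), (1:ℝ)) := by
    intro τ hmem y
    rw [hsymm (τ, y)]
    exact hwaveD τ hmem y
  -- monotonicity of directional derivatives along lines of slope d
  have line_mono : ∀ (v : ℝ × ℝ) (d : ℝ),
      (∀ s ∈ Set.Ico τ₀ τ₁, ∀ y : ℝ, 0 ≤ D2 (s, y) ((1:ℝ), d) v) →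
      ∀ τ ∈ Set.Ico τ₀ τ₁, ∀ c : ℝ,
        D (τ₀, d * τ₀ + c) v ≤ D (τ, d * τ + c) v := by
    intro v d hnn τ hmem c
    have hder : ∀ s : ℝ, HasDerivAt (fun s => D (s, d * s + c) v)
        (D2 (s, d * s + c) ((1:ℝ), d) v) s := by
      intro s
      have hγ : HasDerivAt (fun s : ℝ => (s, d * s + c)) ((1:ℝ), d) s := by
        refine (hasDerivAt_id s).prodMk ?_
        simpa using ((hasDerivAt_id s).const_mul d).add_const c
      simpa [Function.comp_def] using (dirD v (s, d * s + c)).comp_hasDerivAt s hγ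
    have hdiff : Differentiable ℝ (fun s => D (s, d * s + c) v) :=
      fun s => (hder s).differentiableAt
    have hmono : MonotoneOn (fun s => D (s, d * s + c) v) (Set.Icc τ₀ τ) := by
      apply monotoneOn_of_deriv_nonneg (convex_Icc _ _) hdiff.continuous.continuousOn
        (fun s _ => (hdiff s).differentiableWithinAt)
      intro s hs
      rw [interior_Icc] at hs
      rw [(hder s).deriv]
      exact hnn s ⟨hs.1.le, hs.2.trans hmem.2⟩ _
    exact hmono ⟨le_refl _, hmem.1⟩ ⟨hmem.1, le_refl _⟩ hmem.1
  -- periodicity of D in the second variable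
  have hfper : ∀ q : ℝ × ℝ, f (q + ((0:ℝ), 2 * Real.pi)) = f q := by
    rintro ⟨a, b⟩
    show R (a + 0) (b + 2 * Real.pi) = R a b
    rw [add_zero, hper]
  have hDper : ∀ p : ℝ × ℝ, D (p + ((0:ℝ), 2 * Real.pi)) = D p := by
    intro p
    have h1 : HasFDerivAt (fun q : ℝ × ℝ => f (q + ((0:ℝ), 2 * Real.pi)))
        (D (p + ((0:ℝ), 2 * Real.pi))) p := by
      have := (hD (p + ((0:ℝ), 2 * Real.pi))).comp p
        ((hasFDerivAt_id p).add_const ((0:ℝ), 2 * Real.pi))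
      simpa [Function.comp_def] using this
    have h2 : HasFDerivAt f (D (p + ((0:ℝ), 2 * Real.pi))) p := by
      have : (fun q : ℝ × ℝ => f (q + ((0:ℝ), 2 * Real.pi))) = f := funext hfper
      rwa [this] at h1
    exact h2.unique (hD p)
  have hcontD : ∀ v : ℝ × ℝ, Continuous (fun y : ℝ => D (τ₀, y) v) := by
    intro v
    exact ((ContinuousLinearMap.apply ℝ ℝ v).continuous.comp hDdiff.continuous).comp
      (continuous_const.prodMk continuous_id)
  have hperD : ∀ v : ℝ × ℝ, Function.Periodic (fun y : ℝ => D (τ₀, y) v) (2 * Real.pi) := by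
    intro v y
    have : ((τ₀, y) : ℝ × ℝ) + ((0:ℝ), 2 * Real.pi) = (τ₀, y + 2 * Real.pi) := by
      simp [Prod.ext_iff]
    simp only
    rw [← this, hDper]
  -- infima on the initial slice
  obtain ⟨yu, hyu⟩ := periodic_exists_min (hcontD ((1:ℝ), (-1:ℝ))) (hperD ((1:ℝ), (-1:ℝ)))
  obtain ⟨yv, hyv⟩ := periodic_exists_min (hcontD ((1:ℝ), (1:ℝ))) (hperD ((1:ℝ), (1:ℝ)))
  have hbddU : BddBelow (Set.range fun y : ℝ => D (τ₀, y) ((1:ℝ), (-1:ℝ))) :=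
    ⟨_, by rintro _ ⟨x, rfl⟩; exact hyu x⟩
  have hbddV : BddBelow (Set.range fun y : ℝ => D (τ₀, y) ((1:ℝ), (1:ℝ))) :=
    ⟨_, by rintro _ ⟨x, rfl⟩; exact hyv x⟩
  have huD : ∀ y : ℝ, 0 < D (τ₀, y) ((1:ℝ), (-1:ℝ)) := by
    intro y
    have := hu y
    rw [heq1, heq2] at this
    rw [hsub']
    linarith
  have hvD : ∀ y : ℝ, 0 < D (τ₀, y) ((1:ℝ), (1:ℝ)) := by
    intro y
    have := hv y
    rw [heq1, heq2] at this
    rw [hadd']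
    linarith
  set a : ℝ := ⨅ y : ℝ, D (τ₀, y) ((1:ℝ), (-1:ℝ)) with ha
  set b : ℝ := ⨅ y : ℝ, D (τ₀, y) ((1:ℝ), (1:ℝ)) with hb
  have ha_le : ∀ y : ℝ, a ≤ D (τ₀, y) ((1:ℝ), (-1:ℝ)) := fun y => ciInf_le hbddU y
  have hb_le : ∀ y : ℝ, b ≤ D (τ₀, y) ((1:ℝ), (1:ℝ)) := fun y => ciInf_le hbddV y
  have ha_pos : 0 < a := lt_of_lt_of_le (huD yu) (le_ciInf hyu)
  have hb_pos : 0 < b := lt_of_lt_of_le (hvD yv) (le_ciInf hyv)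
  -- main claims (i)
  have claim_u : ∀ τ ∈ Set.Ico τ₀ τ₁, ∀ ξ : ℝ, a ≤ D (τ, ξ) ((1:ℝ), (-1:ℝ)) := by
    intro τ hmem ξ
    have := line_mono ((1:ℝ), (-1:ℝ)) 1 (fun s hs y => by simpa using hwaveD s hs y)
      τ hmem (ξ - τ)
    calc a ≤ D (τ₀, 1 * τ₀ + (ξ - τ)) ((1:ℝ), (-1:ℝ)) := ha_le _
      _ ≤ D (τ, 1 * τ + (ξ - τ)) ((1:ℝ), (-1:ℝ)) := this
      _ = D (τ, ξ) ((1:ℝ), (-1:ℝ)) := by norm_num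
  have claim_v : ∀ τ ∈ Set.Ico τ₀ τ₁, ∀ ξ : ℝ, b ≤ D (τ, ξ) ((1:ℝ), (1:ℝ)) := by
    intro τ hmem ξ
    have := line_mono ((1:ℝ), (1:ℝ)) (-1) (fun s hs y => by simpa using hwaveD' s hs y)
      τ hmem (ξ + τ)
    calc b ≤ D (τ₀, -1 * τ₀ + (ξ + τ)) ((1:ℝ), (1:ℝ)) := hb_le _
      _ ≤ D (τ, -1 * τ + (ξ + τ)) ((1:ℝ), (1:ℝ)) := this
      _ = D (τ, ξ) ((1:ℝ), (1:ℝ)) := by norm_num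
  -- rewrite goal infima
  have hIa : (⨅ ξ' : ℝ, (pd1 R τ₀ ξ' - pd2 R τ₀ ξ')) = a := by
    rw [ha]
    congr 1
    funext y
    rw [heq1, heq2, hsub']
  have hIb : (⨅ ξ' : ℝ, (pd1 R τ₀ ξ' + pd2 R τ₀ ξ')) = b := by
    rw [hb]
    congr 1
    funext y
    rw [heq1, heq2, hadd']
  -- infimum of R on the initial slice
  obtain ⟨yr, hyr⟩ := periodic_exists_min
    (hsmooth.continuous.comp (continuous_const.prodMk continuous_id) :
      Continuous (fun y : ℝ => R τ₀ y))
    (fun y => hper τ₀ y)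
  have hbddR : BddBelow (Set.range fun y : ℝ => R τ₀ y) :=
    ⟨_, by rintro _ ⟨x, rfl⟩; exact hyr x⟩
  -- main goal
  intro τ hmem ξ
  have hU := claim_u τ hmem ξ
  have hV := claim_v τ hmem ξ
  have hUx : a ≤ pd1 R τ ξ - pd2 R τ ξ := by rw [heq1, heq2, ← hsub']; exact hU
  have hVx : b ≤ pd1 R τ ξ + pd2 R τ ξ := by rw [heq1, heq2, ← hadd']; exact hV
  have hmonoR : StrictMonoOn (fun s => R s ξ) (Set.Ico τ₀ τ₁) := by
    have hcontR : ContinuousOn (fun s : ℝ => R s ξ) (Set.Ico τ₀ τ₁) :=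
      (hsmooth.continuous.comp (continuous_id.prodMk continuous_const)).continuousOn
    apply strictMonoOn_of_deriv_pos (convex_Ico _ _) hcontR
    intro s hs
    rw [interior_Ico] at hs
    have hsm : s ∈ Set.Ico τ₀ τ₁ := ⟨hs.1.le, hs.2⟩
    rw [(key1 s ξ).deriv]
    have h1 := claim_u s hsm ξ
    have h2 := claim_v s hsm ξ
    rw [hsub'] at h1
    rw [hadd'] at h2
    linarith
  refine ⟨⟨by rw [hIa]; exact hUx, by rw [hIb]; exact hVx⟩,
    ⟨by rw [hIa, hIb]; linarith, by rw [hIa, hIb]; linarith, hmonoR⟩, ?_, ?_⟩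
  · have h0 : R τ₀ ξ ≤ R τ ξ := by
      rcases eq_or_lt_of_le hmem.1 with h | h
      · rw [h]
      · exact (hmonoR ⟨le_refl _, hτ⟩ hmem h).le
    exact le_trans (ciInf_le hbddR ξ) h0
  · rw [hIa, hIb, heq1, heq2]
    rw [hsub'] at hU
    rw [hadd'] at hV
    have hmul : a * b ≤ ((D (τ, ξ)) ((1:ℝ), (0:ℝ)) - (D (τ, ξ)) ((0:ℝ), (1:ℝ)))
        * ((D (τ, ξ)) ((1:ℝ), (0:ℝ)) + (D (τ, ξ)) ((0:ℝ), (1:ℝ))) :=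
      mul_le_mul hU hV hb_pos.le (ha_pos.le.trans hU)
    calc a * b ≤ _ := hmul
      _ = (D (τ, ξ)) ((1:ℝ), (0:ℝ)) ^ 2 - (D (τ, ξ)) ((0:ℝ), (1:ℝ)) ^ 2 := by ring
end

section
/- Let K ∈ ℝ and let U, U₀, A, A₀, ν, ν₀, R, Ṙ : ℝ → ℝ be smooth 2π-periodic functions with R > 0, satisfying the two conformal constraint equations on the slice: (C1') U₀² + (U')² + (e^{4U}/(4R²))(A₀² + (A')²) + R''/R − ν₀Ṙ/R − ν'R'/R + (e^{2ν}K²)/(4R⁴) = 0, and (C2') 2U₀U' + (e^{4U}/(2R²))A₀A' + Ṙ'/R − ν'Ṙ/R − ν₀R'/R = 0 (primes denoting derivatives in the spatial variable ξ). Then either Ṙ(ξ)² − R'(ξ)² > 0 for every ξ, or else Ṙ ≡ 0, R' ≡ 0, U' ≡ 0, U₀ ≡ 0, A' ≡ 0, A₀ ≡ 0, and K = 0. -/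
open Real Set

/-- Fundamental theorem of calculus for continuous integrands. -/
lemma tsym_ftc_hasDerivAt (a : ℝ → ℝ) (ha : Continuous a) (x : ℝ) :
    HasDerivAt (fun u => ∫ t in (0:ℝ)..u, a t) (a x) x :=
  intervalIntegral.integral_hasDerivAt_right (ha.intervalIntegrable 0 x)
    (ha.stronglyMeasurableAtFilter _ _) ha.continuousAt

/-- The derivative of a periodic function is periodic. -/
lemma tsym_periodic_deriv (f : ℝ → ℝ) (c : ℝ) (h : Function.Periodic f c) :
    Function.Periodic (deriv f) c := by
  intro x
  have h1 : (fun y => f (y + c)) = f := funext h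
  calc deriv f (x + c) = deriv (fun y => f (y + c)) x := (deriv_comp_add_const f c x).symm
    _ = deriv f x := by rw [h1]

/-- A monotone periodic function is constant. -/
lemma tsym_monotone_periodic_const (f : ℝ → ℝ) (c : ℝ) (hc : 0 < c) (hm : Monotone f)
    (h : Function.Periodic f c) (x y : ℝ) : f x = f y := by
  have key : ∀ u v : ℝ, u ≤ v → f u = f v := by
    intro u v huv
    refine le_antisymm (hm huv) ?_
    obtain ⟨n, hn⟩ := exists_nat_ge ((v - u) / c)
    have hvu : v ≤ u + n * c := by
      rw [div_le_iff₀ hc] at hn; linarith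
    calc f v ≤ f (u + n * c) := hm hvu
      _ = f u := (h.nat_mul n) u
  rcases le_total x y with hxy | hxy
  · exact key x y hxy
  · exact (key y x hxy).symm

section KeyLemma

variable (lam a N : ℝ → ℝ)

/-- Monotone integrating-factor function. -/
lemma tsym_exists_mu (ha : Continuous a)
    (hode : ∀ ξ, HasDerivAt lam (a ξ * lam ξ - N ξ) ξ)
    (hN : ∀ ξ, 0 ≤ N ξ) :
    ∃ E : ℝ → ℝ, (∀ x, 0 < E x) ∧ Antitone (fun x => E x * lam x) := by
  set F : ℝ → ℝ := fun u => ∫ t in (0:ℝ)..u, a t with hF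
  refine ⟨fun x => Real.exp (-F x), fun x => Real.exp_pos _, ?_⟩
  have hder : ∀ x, HasDerivAt (fun y => Real.exp (-F y) * lam y)
      (-(Real.exp (-F x) * N x)) x := by
    intro x
    have h1 : HasDerivAt (fun y => Real.exp (-F y)) (Real.exp (-F x) * (-(a x))) x :=
      (tsym_ftc_hasDerivAt a ha x).neg.exp
    have h2 := h1.mul (hode x)
    refine h2.congr_deriv ?_
    ring
  have hdiff : Differentiable ℝ (fun y => Real.exp (-F y) * lam y) :=
    fun x => (hder x).differentiableAt
  apply antitone_of_deriv_nonpos hdiff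
  intro x
  rw [(hder x).deriv]
  have := hN x
  have := Real.exp_pos (-F x)
  nlinarith

/-- If `lam` is nonpositive at one point it is nonpositive everywhere. -/
lemma tsym_key_nonpos (ha : Continuous a)
    (hode : ∀ ξ, HasDerivAt lam (a ξ * lam ξ - N ξ) ξ)
    (hN : ∀ ξ, 0 ≤ N ξ)
    (hper : Function.Periodic lam (2 * Real.pi))
    (ξ₀ : ℝ) (h0 : lam ξ₀ ≤ 0) : ∀ ξ, lam ξ ≤ 0 := by
  obtain ⟨E, hEpos, hanti⟩ := tsym_exists_mu lam a N ha hode hN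
  intro ξ
  obtain ⟨n, hn⟩ := exists_nat_ge ((ξ₀ - ξ) / (2 * Real.pi))
  have h2π : (0:ℝ) < 2 * Real.pi := by positivity
  have hge : ξ₀ ≤ ξ + n * (2 * Real.pi) := by
    rw [div_le_iff₀ h2π] at hn; linarith
  have h1 : E (ξ + n * (2 * Real.pi)) * lam (ξ + n * (2 * Real.pi)) ≤ E ξ₀ * lam ξ₀ :=
    hanti hge
  have h2 : E ξ₀ * lam ξ₀ ≤ 0 := mul_nonpos_of_nonneg_of_nonpos (hEpos ξ₀).le h0
  have h3 : lam (ξ + n * (2 * Real.pi)) = lam ξ := (hper.nat_mul n) ξ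
  rw [h3] at h1
  nlinarith [hEpos (ξ + n * (2 * Real.pi))]

/-- If `lam` is nonnegative at one point it is nonnegative everywhere. -/
lemma tsym_key_nonneg (ha : Continuous a)
    (hode : ∀ ξ, HasDerivAt lam (a ξ * lam ξ - N ξ) ξ)
    (hN : ∀ ξ, 0 ≤ N ξ)
    (hper : Function.Periodic lam (2 * Real.pi))
    (ξ₀ : ℝ) (h0 : 0 ≤ lam ξ₀) : ∀ ξ, 0 ≤ lam ξ := by
  obtain ⟨E, hEpos, hanti⟩ := tsym_exists_mu lam a N ha hode hN
  intro ξ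
  obtain ⟨n, hn⟩ := exists_nat_ge ((ξ - ξ₀) / (2 * Real.pi))
  have h2π : (0:ℝ) < 2 * Real.pi := by positivity
  have hle : ξ - n * (2 * Real.pi) ≤ ξ₀ := by
    rw [div_le_iff₀ h2π] at hn; linarith
  have h1 : E ξ₀ * lam ξ₀ ≤ E (ξ - n * (2 * Real.pi)) * lam (ξ - n * (2 * Real.pi)) :=
    hanti hle
  have h2 : 0 ≤ E ξ₀ * lam ξ₀ := mul_nonneg (hEpos ξ₀).le h0
  have h3 : lam (ξ - n * (2 * Real.pi)) = lam ξ := hper.sub_nat_mul_eq n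
  rw [h3] at h1
  nlinarith [hEpos (ξ - n * (2 * Real.pi))]

/-- If `lam` vanishes identically, the source `N` vanishes identically. -/
lemma tsym_N_of_lam_zero
    (hode : ∀ ξ, HasDerivAt lam (a ξ * lam ξ - N ξ) ξ)
    (h0 : ∀ ξ, lam ξ = 0) : ∀ ξ, N ξ = 0 := by
  intro ξ
  have hl : lam = fun _ => (0:ℝ) := funext h0
  have h := hode ξ
  rw [hl] at h
  have h2 : HasDerivAt (fun _ : ℝ => (0:ℝ)) 0 ξ := hasDerivAt_const ξ 0
  have := h.unique h2
  simp at this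
  linarith

end KeyLemma

/-- **The gradient of the area function is timelike unless the data are trivial**
(coordinate version, on a slice of constant conformal time).
If smooth `2π`-periodic functions `(U, U₀, A, A₀, ν, ν₀, R, Rdot)` with `R > 0`
satisfy the conformal constraint equations (C1') and (C2'), then either
`Ṙ² − (R')² > 0` everywhere, or else `Ṙ ≡ 0`, `R' ≡ 0`, `U' ≡ 0`, `U₀ ≡ 0`,
`A' ≡ 0`, `A₀ ≡ 0` and `K = 0`. -/
theorem gradient_of_area_timelike_or_flat
    (K : ℝ) (U U₀ A A₀ ν ν₀ R Rdot : ℝ → ℝ)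
    (hU : ContDiff ℝ (⊤ : ℕ∞) U) (hU₀ : ContDiff ℝ (⊤ : ℕ∞) U₀)
    (hA : ContDiff ℝ (⊤ : ℕ∞) A) (hA₀ : ContDiff ℝ (⊤ : ℕ∞) A₀)
    (hν : ContDiff ℝ (⊤ : ℕ∞) ν) (hν₀ : ContDiff ℝ (⊤ : ℕ∞) ν₀)
    (hR : ContDiff ℝ (⊤ : ℕ∞) R) (hRdot : ContDiff ℝ (⊤ : ℕ∞) Rdot)
    (hUper : ∀ ξ : ℝ, U (ξ + 2 * Real.pi) = U ξ)
    (hU₀per : ∀ ξ : ℝ, U₀ (ξ + 2 * Real.pi) = U₀ ξ)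
    (hAper : ∀ ξ : ℝ, A (ξ + 2 * Real.pi) = A ξ)
    (hA₀per : ∀ ξ : ℝ, A₀ (ξ + 2 * Real.pi) = A₀ ξ)
    (hνper : ∀ ξ : ℝ, ν (ξ + 2 * Real.pi) = ν ξ)
    (hν₀per : ∀ ξ : ℝ, ν₀ (ξ + 2 * Real.pi) = ν₀ ξ)
    (hRper : ∀ ξ : ℝ, R (ξ + 2 * Real.pi) = R ξ)
    (hRdotper : ∀ ξ : ℝ, Rdot (ξ + 2 * Real.pi) = Rdot ξ)
    (hRpos : ∀ ξ : ℝ, 0 < R ξ)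
    (hC1 : ∀ ξ : ℝ,
      (U₀ ξ) ^ 2 + (deriv U ξ) ^ 2
        + Real.exp (4 * U ξ) / (4 * (R ξ) ^ 2) * ((A₀ ξ) ^ 2 + (deriv A ξ) ^ 2)
        + deriv (deriv R) ξ / R ξ
        - ν₀ ξ * Rdot ξ / R ξ
        - deriv ν ξ * deriv R ξ / R ξ
        + Real.exp (2 * ν ξ) * K ^ 2 / (4 * (R ξ) ^ 4) = 0)
    (hC2 : ∀ ξ : ℝ,
      2 * U₀ ξ * deriv U ξ
        + Real.exp (4 * U ξ) / (2 * (R ξ) ^ 2) * (A₀ ξ * deriv A ξ)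
        + deriv Rdot ξ / R ξ
        - deriv ν ξ * Rdot ξ / R ξ
        - ν₀ ξ * deriv R ξ / R ξ = 0) :
    (∀ ξ : ℝ, 0 < (Rdot ξ) ^ 2 - (deriv R ξ) ^ 2) ∨
      ((∀ ξ : ℝ, Rdot ξ = 0) ∧ (∀ ξ : ℝ, deriv R ξ = 0) ∧
        (∀ ξ : ℝ, deriv U ξ = 0) ∧ (∀ ξ : ℝ, U₀ ξ = 0) ∧
        (∀ ξ : ℝ, deriv A ξ = 0) ∧ (∀ ξ : ℝ, A₀ ξ = 0) ∧ K = 0) := by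
  by_cases hmain : ∀ ξ : ℝ, 0 < (Rdot ξ) ^ 2 - (deriv R ξ) ^ 2
  · exact Or.inl hmain
  right
  have h2π : (0:ℝ) < 2 * Real.pi := by positivity
  have hRd : Differentiable ℝ R := hR.differentiable (by simp)
  have hR'cd : ContDiff ℝ (⊤ : ℕ∞) (deriv R) := (contDiff_infty_iff_deriv.mp hR).2
  have hR'd : Differentiable ℝ (deriv R) := hR'cd.differentiable (by simp)
  have hRdotd : Differentiable ℝ Rdot := hRdot.differentiable (by simp)
  have haPc : Continuous (fun ξ => ν₀ ξ + deriv ν ξ) :=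
    hν₀.continuous.add ((contDiff_infty_iff_deriv.mp hν).2).continuous
  have haMc : Continuous (fun ξ => deriv ν ξ - ν₀ ξ) :=
    ((contDiff_infty_iff_deriv.mp hν).2).continuous.sub hν₀.continuous
  -- cleaned (polynomial) versions of the constraints
  have hclean : ∀ ξ : ℝ,
      (4*(R ξ)^4*((U₀ ξ)^2+(deriv U ξ)^2) + (R ξ)^2*Real.exp (4*U ξ)*((A₀ ξ)^2+(deriv A ξ)^2)
        + 4*(R ξ)^3*(deriv (deriv R) ξ) - 4*(R ξ)^3*(ν₀ ξ * Rdot ξ)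
        - 4*(R ξ)^3*(deriv ν ξ * deriv R ξ) + Real.exp (2*ν ξ)*K^2 = 0) ∧
      (4*(R ξ)^2*(U₀ ξ * deriv U ξ) + Real.exp (4*U ξ)*(A₀ ξ * deriv A ξ)
        + 2*(R ξ)*(deriv Rdot ξ) - 2*(R ξ)*(deriv ν ξ * Rdot ξ)
        - 2*(R ξ)*(ν₀ ξ * deriv R ξ) = 0) := by
    intro ξ
    have hr : R ξ ≠ 0 := (hRpos ξ).ne'
    have h1 := hC1 ξ
    have h2 := hC2 ξ
    field_simp at h1 h2
    have h4 : (4:ℝ)*(R ξ)^5 ≠ 0 := by simp [hr]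
    have h3 : (R ξ)^3 ≠ 0 := pow_ne_zero _ hr
    constructor
    · rcases mul_eq_zero.mp (show (4*(R ξ)^5) *
        (4*(R ξ)^4*((U₀ ξ)^2+(deriv U ξ)^2) + (R ξ)^2*Real.exp (4*U ξ)*((A₀ ξ)^2+(deriv A ξ)^2)
          + 4*(R ξ)^3*(deriv (deriv R) ξ) - 4*(R ξ)^3*(ν₀ ξ * Rdot ξ)
          - 4*(R ξ)^3*(deriv ν ξ * deriv R ξ) + Real.exp (2*ν ξ)*K^2) = 0 from by
            linear_combination (4*(R ξ)^5) * h1) with h | h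
      · exact absurd h h4
      · exact h
    · rcases mul_eq_zero.mp (show ((R ξ)^3) *
        (4*(R ξ)^2*(U₀ ξ * deriv U ξ) + Real.exp (4*U ξ)*(A₀ ξ * deriv A ξ)
          + 2*(R ξ)*(deriv Rdot ξ) - 2*(R ξ)*(deriv ν ξ * Rdot ξ)
          - 2*(R ξ)*(ν₀ ξ * deriv R ξ)) = 0 from by
            linear_combination (R ξ)^3 * h2) with h | h
      · exact absurd h h3
      · exact h
  -- the two first order ODEs
  have hodeP : ∀ ξ, HasDerivAt (fun ξ => Rdot ξ + deriv R ξ)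
      ((ν₀ ξ + deriv ν ξ) * (Rdot ξ + deriv R ξ)
        - (R ξ * (U₀ ξ + deriv U ξ)^2 + Real.exp (4*U ξ)/(4*R ξ) * (A₀ ξ + deriv A ξ)^2
            + Real.exp (2*ν ξ)*K^2/(4*(R ξ)^3))) ξ := by
    intro ξ
    have hd : HasDerivAt (fun ξ => Rdot ξ + deriv R ξ)
        (deriv Rdot ξ + deriv (deriv R) ξ) ξ :=
      ((hRdotd ξ).hasDerivAt).add ((hR'd ξ).hasDerivAt)
    convert hd using 1
    obtain ⟨h1', h2'⟩ := hclean ξ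
    have hr : R ξ ≠ 0 := (hRpos ξ).ne'
    field_simp
    linear_combination -h1' - 2*(R ξ)^2*h2'
  have hodeM : ∀ ξ, HasDerivAt (fun ξ => deriv R ξ - Rdot ξ)
      ((deriv ν ξ - ν₀ ξ) * (deriv R ξ - Rdot ξ)
        - (R ξ * (U₀ ξ - deriv U ξ)^2 + Real.exp (4*U ξ)/(4*R ξ) * (A₀ ξ - deriv A ξ)^2
            + Real.exp (2*ν ξ)*K^2/(4*(R ξ)^3))) ξ := by
    intro ξ
    have hd : HasDerivAt (fun ξ => deriv R ξ - Rdot ξ)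
        (deriv (deriv R) ξ - deriv Rdot ξ) ξ :=
      ((hR'd ξ).hasDerivAt).sub ((hRdotd ξ).hasDerivAt)
    convert hd using 1
    obtain ⟨h1', h2'⟩ := hclean ξ
    have hr : R ξ ≠ 0 := (hRpos ξ).ne'
    field_simp
    linear_combination -h1' + 2*(R ξ)^2*h2'
  -- positivity of the sources
  have hNP : ∀ ξ : ℝ, 0 ≤ R ξ * (U₀ ξ + deriv U ξ)^2
      + Real.exp (4*U ξ)/(4*R ξ) * (A₀ ξ + deriv A ξ)^2
      + Real.exp (2*ν ξ)*K^2/(4*(R ξ)^3) := by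
    intro ξ
    have h1 := hRpos ξ
    have h2 := Real.exp_pos (4*U ξ)
    have h3 := Real.exp_pos (2*ν ξ)
    have h4 : (0:ℝ) < 4*(R ξ)^3 := by positivity
    have h5 : (0:ℝ) < 4*R ξ := by linarith
    apply add_nonneg (add_nonneg ?_ ?_) ?_
    · exact mul_nonneg h1.le (sq_nonneg _)
    · exact mul_nonneg (div_nonneg h2.le h5.le) (sq_nonneg _)
    · exact div_nonneg (mul_nonneg h3.le (sq_nonneg _)) h4.le
  have hNM : ∀ ξ : ℝ, 0 ≤ R ξ * (U₀ ξ - deriv U ξ)^2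
      + Real.exp (4*U ξ)/(4*R ξ) * (A₀ ξ - deriv A ξ)^2
      + Real.exp (2*ν ξ)*K^2/(4*(R ξ)^3) := by
    intro ξ
    have h1 := hRpos ξ
    have h2 := Real.exp_pos (4*U ξ)
    have h3 := Real.exp_pos (2*ν ξ)
    have h4 : (0:ℝ) < 4*(R ξ)^3 := by positivity
    have h5 : (0:ℝ) < 4*R ξ := by linarith
    apply add_nonneg (add_nonneg ?_ ?_) ?_
    · exact mul_nonneg h1.le (sq_nonneg _)
    · exact mul_nonneg (div_nonneg h2.le h5.le) (sq_nonneg _)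
    · exact div_nonneg (mul_nonneg h3.le (sq_nonneg _)) h4.le
  -- periodicity
  have hR'per : Function.Periodic (deriv R) (2 * Real.pi) :=
    tsym_periodic_deriv R _ hRper
  have hPper : Function.Periodic (fun ξ => Rdot ξ + deriv R ξ) (2 * Real.pi) := by
    intro ξ; simp only [hRdotper ξ, hR'per ξ]
  have hMper : Function.Periodic (fun ξ => deriv R ξ - Rdot ξ) (2 * Real.pi) := by
    intro ξ; simp only [hRdotper ξ, hR'per ξ]
  -- the dichotomy point
  push_neg at hmain
  obtain ⟨ξ₀, hξ₀⟩ := hmain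
  have hPM : 0 ≤ (Rdot ξ₀ + deriv R ξ₀) * (deriv R ξ₀ - Rdot ξ₀) := by nlinarith
  -- first show deriv R ≡ 0 and Rdot ≡ 0
  have hkey : (∀ ξ, deriv R ξ = 0) ∧ (∀ ξ, Rdot ξ = 0) := by
    rcases mul_nonneg_iff.mp hPM with ⟨hP0, hM0⟩ | ⟨hP0, hM0⟩
    · have hPge := tsym_key_nonneg _ _ _ haPc hodeP hNP hPper ξ₀ hP0
      have hMge := tsym_key_nonneg _ _ _ haMc hodeM hNM hMper ξ₀ hM0
      have hd : ∀ ξ, 0 ≤ deriv R ξ := by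
        intro ξ; have := hPge ξ; have := hMge ξ; linarith
      have hmono : Monotone R := monotone_of_deriv_nonneg hRd hd
      have hconst : ∀ x y : ℝ, R x = R y :=
        tsym_monotone_periodic_const R _ h2π hmono hRper
      have hR'0 : ∀ ξ, deriv R ξ = 0 := by
        have hRc : R = fun _ => R 0 := funext fun x => hconst x 0
        intro ξ; rw [hRc]; simp
      refine ⟨hR'0, fun ξ => ?_⟩
      have h1 := hPge ξ; have h2 := hMge ξ; have h3 := hR'0 ξ
      linarith
    · have hPle := tsym_key_nonpos _ _ _ haPc hodeP hNP hPper ξ₀ hP0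
      have hMle := tsym_key_nonpos _ _ _ haMc hodeM hNM hMper ξ₀ hM0
      have hd : ∀ ξ, deriv R ξ ≤ 0 := by
        intro ξ; have := hPle ξ; have := hMle ξ; linarith
      have hmono : Monotone (fun x => -R x) := by
        apply monotone_of_deriv_nonneg (hRd.neg)
        intro x
        rw [deriv.neg]
        linarith [hd x]
      have hconst : ∀ x y : ℝ, R x = R y := by
        intro x y
        have := tsym_monotone_periodic_const (fun x => -R x) _ h2π hmono
          (fun ξ => by simp [hRper ξ]) x y
        simpa using this
      have hR'0 : ∀ ξ, deriv R ξ = 0 := by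
        have hRc : R = fun _ => R 0 := funext fun x => hconst x 0
        intro ξ; rw [hRc]; simp
      refine ⟨hR'0, fun ξ => ?_⟩
      have h1 := hPle ξ; have h2 := hMle ξ; have h3 := hR'0 ξ
      linarith
  obtain ⟨hR'0, hRdot0⟩ := hkey
  -- both lambdas vanish, hence the sources vanish
  have hPzero : ∀ ξ : ℝ, (fun ξ => Rdot ξ + deriv R ξ) ξ = 0 := by
    intro ξ; simp only; rw [hRdot0 ξ, hR'0 ξ]; ring
  have hMzero : ∀ ξ : ℝ, (fun ξ => deriv R ξ - Rdot ξ) ξ = 0 := by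
    intro ξ; simp only; rw [hRdot0 ξ, hR'0 ξ]; ring
  have hNP0 := tsym_N_of_lam_zero _ _ _ hodeP hPzero
  have hNM0 := tsym_N_of_lam_zero _ _ _ hodeM hMzero
  -- extract the vanishing of the individual terms
  have hterms : ∀ ξ : ℝ, (U₀ ξ + deriv U ξ = 0) ∧ (A₀ ξ + deriv A ξ = 0) ∧
      (U₀ ξ - deriv U ξ = 0) ∧ (A₀ ξ - deriv A ξ = 0) ∧
      (Real.exp (2*ν ξ)*K^2/(4*(R ξ)^3) = 0) := by
    intro ξ
    have h1 := hNP0 ξ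
    have h2 := hNM0 ξ
    have hr := hRpos ξ
    have he2 := Real.exp_pos (4*U ξ)
    have he3 := Real.exp_pos (2*ν ξ)
    have ht1 : 0 ≤ R ξ * (U₀ ξ + deriv U ξ)^2 := mul_nonneg hr.le (sq_nonneg _)
    have ht2 : 0 ≤ Real.exp (4*U ξ)/(4*R ξ) * (A₀ ξ + deriv A ξ)^2 :=
      mul_nonneg (div_nonneg he2.le (by linarith)) (sq_nonneg _)
    have ht3 : 0 ≤ Real.exp (2*ν ξ)*K^2/(4*(R ξ)^3) :=
      div_nonneg (mul_nonneg he3.le (sq_nonneg _)) (by positivity)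
    have ht4 : 0 ≤ R ξ * (U₀ ξ - deriv U ξ)^2 := mul_nonneg hr.le (sq_nonneg _)
    have ht5 : 0 ≤ Real.exp (4*U ξ)/(4*R ξ) * (A₀ ξ - deriv A ξ)^2 :=
      mul_nonneg (div_nonneg he2.le (by linarith)) (sq_nonneg _)
    have hz1 : R ξ * (U₀ ξ + deriv U ξ)^2 = 0 := by linarith
    have hz2 : Real.exp (4*U ξ)/(4*R ξ) * (A₀ ξ + deriv A ξ)^2 = 0 := by linarith
    have hz3 : Real.exp (2*ν ξ)*K^2/(4*(R ξ)^3) = 0 := by linarith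
    have hz4 : R ξ * (U₀ ξ - deriv U ξ)^2 = 0 := by linarith
    have hz5 : Real.exp (4*U ξ)/(4*R ξ) * (A₀ ξ - deriv A ξ)^2 = 0 := by linarith
    have he2r : Real.exp (4*U ξ)/(4*R ξ) ≠ 0 := by positivity
    refine ⟨?_, ?_, ?_, ?_, hz3⟩
    · have := (mul_eq_zero.mp hz1).resolve_left hr.ne'
      exact pow_eq_zero_iff two_ne_zero |>.mp this
    · have := (mul_eq_zero.mp hz2).resolve_left he2r
      exact pow_eq_zero_iff two_ne_zero |>.mp this
    · have := (mul_eq_zero.mp hz4).resolve_left hr.ne'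
      exact pow_eq_zero_iff two_ne_zero |>.mp this
    · have := (mul_eq_zero.mp hz5).resolve_left he2r
      exact pow_eq_zero_iff two_ne_zero |>.mp this
  have hK : K = 0 := by
    obtain ⟨_, _, _, _, hz3⟩ := hterms 0
    have hr := hRpos 0
    have he3 := Real.exp_pos (2*ν 0)
    have hden : (4*(R 0)^3) ≠ 0 := by positivity
    have := (div_eq_zero_iff.mp hz3).resolve_right hden
    have hK2 : K^2 = 0 := by
      rcases mul_eq_zero.mp this with h | h
      · exact absurd h he3.ne'
      · exact h
    exact pow_eq_zero_iff two_ne_zero |>.mp hK2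
  refine ⟨hRdot0, hR'0, fun ξ => ?_, fun ξ => ?_, fun ξ => ?_, fun ξ => ?_, hK⟩
  · obtain ⟨ha, _, hb, _, _⟩ := hterms ξ; linarith
  · obtain ⟨ha, _, hb, _, _⟩ := hterms ξ; linarith
  · obtain ⟨_, ha, _, hb, _⟩ := hterms ξ; linarith
  · obtain ⟨_, ha, _, hb, _⟩ := hterms ξ; linarith
end
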